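/- arXiv:1302.3965 — 17 statements merged into one kernel-verified Lean document; each statement's English description precedes it below -/
import Mathlib

section
/- Let X, Y be real Banach spaces and T ∈ B(X,Y) with T ≠ 0. Then T has a bounded homogeneous generalized inverse T^h : Y → X if and only if the range R(T) is closed in Y and there exist a bounded quasi-linear projector P : X → X with R(P) = N(T) and a bounded homogeneous projector Q : Y → Y with R(Q) = R(T). -/
open Metric Set

variable {X Y : Type*} [NormedAddCommGroup X] [NormedSpace ℝ X]
  [NormedAddCommGroup Y] [NormedSpace ℝ Y]

/-- `F` is a bounded homogeneous operator: `F (c • x) = c • F x` for all real `c`,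
and `F` maps bounded sets to bounded sets (equivalently, `‖F x‖ ≤ M * ‖x‖`). -/
def BddHomOp (F : X → Y) : Prop :=
  (∀ (c : ℝ) (x : X), F (c • x) = c • F x) ∧ ∃ M : ℝ, ∀ x, ‖F x‖ ≤ M * ‖x‖

/-- The norm of a (homogeneous) map: `sup {‖F x‖ : ‖x‖ = 1}`. -/
noncomputable def hnorm (F : X → Y) : ℝ :=
  sSup ((fun x => ‖F x‖) '' {x : X | ‖x‖ = 1})

/-- `F` is quasi-additive on the subset `M`. -/
def QuasiAdditiveOn (F : X → Y) (M : Set X) : Prop :=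
  ∀ x : X, ∀ z ∈ M, F (x + z) = F x + F z

/-- `S` is a bounded homogeneous generalized inverse of `T`: `T S T = T` and `S T S = S`. -/
def GenInv (T : X →L[ℝ] Y) (S : Y → X) : Prop :=
  BddHomOp S ∧ (∀ x, T (S (T x)) = T x) ∧ (∀ y, S (T (S y)) = S y)

/-- A subset `V` is Chebyshev: every point has a unique nearest point in `V`. -/
def IsChebyshev (V : Set X) : Prop :=
  ∀ x : X, ∃! v, v ∈ V ∧ ‖x - v‖ = Metric.infDist x V

/-- `p` is the metric projector onto `V`: `p x ∈ V` is a nearest point to `x` in `V`. -/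
def IsMetricProjOn (V : Set X) (p : X → X) : Prop :=
  ∀ x, p x ∈ V ∧ ‖x - p x‖ = Metric.infDist x V

/-- `TH` is a quasi-linear projector generalized inverse of `T`. -/
def QLPGenInv (T : X →L[ℝ] Y) (TH : Y → X) : Prop :=
  BddHomOp TH ∧ (∀ x, T (TH (T x)) = T x) ∧ (∀ y, TH (T (TH y)) = TH y) ∧
  (∃ P : X →L[ℝ] X, (∀ x, P (P x) = P x) ∧ Set.range ⇑P = {x : X | T x = 0} ∧
    ∀ x, TH (T x) = x - P x) ∧
  (∃ Q : Y → Y, BddHomOp Q ∧ (∀ y, Q (Q y) = Q y) ∧ QuasiAdditiveOn Q (Set.range Q) ∧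
    Set.range Q = Set.range ⇑T ∧ ∀ y, T (TH y) = Q y)

theorem stmt_0 [CompleteSpace X] [CompleteSpace Y] (T : X →L[ℝ] Y) (hT : T ≠ 0) :
    (∃ Th : Y → X, GenInv T Th) ↔
      (IsClosed (Set.range ⇑T) ∧
        (∃ P : X → X, BddHomOp P ∧ (∀ x, P (P x) = P x) ∧
          QuasiAdditiveOn P (Set.range P) ∧ Set.range P = {x : X | T x = 0}) ∧
        (∃ Q : Y → Y, BddHomOp Q ∧ (∀ y, Q (Q y) = Q y) ∧
          Set.range Q = Set.range ⇑T)) := by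
  constructor
  · rintro ⟨Th, ⟨⟨hhom, M, hM⟩, h1, h2⟩⟩
    have hTh0 : Th 0 = 0 := by
      have := hhom 0 0
      simpa using this
    obtain ⟨M₀, hM₀, hM₀nn⟩ : ∃ M₀ : ℝ, (∀ y, ‖Th y‖ ≤ M₀ * ‖y‖) ∧ 0 ≤ M₀ :=
      ⟨max M 0, fun y => (hM y).trans
        (mul_le_mul_of_nonneg_right (le_max_left _ _) (norm_nonneg _)), le_max_right _ _⟩
    refine ⟨?_, ?_, ?_⟩
    · -- closed range via controlled closure
      have key : ∀ f : NormedAddGroupHom X Y, (∀ x, f x = T x) →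
          (∀ x, f.toAddMonoidHom x = T x) → IsClosed (Set.range ⇑T) := by
        intro f hfapp hfapp2
        have hsw : f.SurjectiveOnWith f.range (M₀ + 1) := by
          intro y hy
          obtain ⟨x, hx⟩ := hy
          have hyT : T x = y := by rw [← hfapp2]; exact hx
          refine ⟨Th y, ?_, ?_⟩
          · rw [hfapp, ← hyT]; exact h1 x
          · calc ‖Th y‖ ≤ M₀ * ‖y‖ := hM₀ _
              _ ≤ (M₀ + 1) * ‖y‖ := by nlinarith [norm_nonneg y]
        have hsw' := controlled_closure_of_complete (f := f)
          (by positivity : (0:ℝ) < M₀ + 1) one_pos hsw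
        apply isClosed_of_closure_subset
        intro y hy
        have hy' : y ∈ f.range.topologicalClosure := by
          rw [← SetLike.mem_coe, AddSubgroup.topologicalClosure_coe]
          apply closure_mono (fun z hz => ?_) hy
          obtain ⟨x, hx⟩ := hz
          exact ⟨x, by rw [hfapp2]; exact hx⟩
        obtain ⟨x, hx, -⟩ := hsw' y hy'
        exact ⟨x, by rw [← hfapp]; exact hx⟩
      exact key ⟨⇑T, fun x y => map_add T x y, ⟨‖T‖, fun v => T.le_opNorm v⟩⟩
        (fun _ => rfl) (fun _ => rfl)
    · -- quasi-linear projector P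
      refine ⟨fun x => x - Th (T x), ⟨?_, ?_⟩, ?_, ?_, ?_⟩
      · intro c x
        show c • x - Th (T (c • x)) = c • (x - Th (T x))
        rw [map_smul, hhom, smul_sub]
      · refine ⟨1 + M₀ * ‖T‖, fun x => ?_⟩
        calc ‖x - Th (T x)‖ ≤ ‖x‖ + ‖Th (T x)‖ := norm_sub_le _ _
          _ ≤ ‖x‖ + M₀ * ‖T x‖ := by linarith [hM₀ (T x)]
          _ ≤ ‖x‖ + M₀ * (‖T‖ * ‖x‖) := by
              have := T.le_opNorm x
              nlinarith
          _ = (1 + M₀ * ‖T‖) * ‖x‖ := by ring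
      · intro x
        show (x - Th (T x)) - Th (T (x - Th (T x))) = x - Th (T x)
        have : T (x - Th (T x)) = 0 := by
          rw [map_sub, h1, sub_self]
        rw [this, hTh0, sub_zero]
      · rintro x z ⟨w, rfl⟩
        show (x + (w - Th (T w))) - Th (T (x + (w - Th (T w)))) =
          (x - Th (T x)) + ((w - Th (T w)) - Th (T (w - Th (T w))))
        have hz : T (w - Th (T w)) = 0 := by rw [map_sub, h1, sub_self]
        rw [map_add, hz, add_zero, hTh0, sub_zero]
        abel
      · ext x
        constructor
        · rintro ⟨w, rfl⟩
          show T (w - Th (T w)) = 0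
          rw [map_sub, h1, sub_self]
        · intro hx
          refine ⟨x, ?_⟩
          show x - Th (T x) = x
          rw [Set.mem_setOf_eq.mp hx, hTh0, sub_zero]
    · -- homogeneous projector Q
      refine ⟨fun y => T (Th y), ⟨?_, ?_⟩, ?_, ?_⟩
      · intro c y
        show T (Th (c • y)) = c • T (Th y)
        rw [hhom, map_smul]
      · refine ⟨‖T‖ * M₀, fun y => ?_⟩
        calc ‖T (Th y)‖ ≤ ‖T‖ * ‖Th y‖ := T.le_opNorm _
          _ ≤ ‖T‖ * (M₀ * ‖y‖) := by
              have := hM₀ y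
              nlinarith [norm_nonneg T]
          _ = ‖T‖ * M₀ * ‖y‖ := by ring
      · intro y
        show T (Th (T (Th y))) = T (Th y)
        rw [h2]
      · ext y
        constructor
        · rintro ⟨w, rfl⟩
          exact ⟨Th w, rfl⟩
        · rintro ⟨x, rfl⟩
          exact ⟨T x, by show T (Th (T x)) = T x; rw [h1]⟩
  · rintro ⟨hcl, ⟨P, ⟨hPhom, MP, hMP⟩, hPp, hPqa, hPr⟩, ⟨Q, ⟨hQhom, MQ, hMQ⟩, hQp, hQr⟩⟩
    obtain ⟨MP₀, hMP₀, hMP₀nn⟩ : ∃ m : ℝ, (∀ x, ‖P x‖ ≤ m * ‖x‖) ∧ 0 ≤ m :=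
      ⟨max MP 0, fun x => (hMP x).trans
        (mul_le_mul_of_nonneg_right (le_max_left _ _) (norm_nonneg _)), le_max_right _ _⟩
    obtain ⟨MQ₀, hMQ₀, hMQ₀nn⟩ : ∃ m : ℝ, (∀ y, ‖Q y‖ ≤ m * ‖y‖) ∧ 0 ≤ m :=
      ⟨max MQ 0, fun y => (hMQ y).trans
        (mul_le_mul_of_nonneg_right (le_max_left _ _) (norm_nonneg _)), le_max_right _ _⟩
    have hPfix : ∀ z ∈ Set.range P, P z = z := by
      rintro z ⟨w, rfl⟩; exact hPp w
    have hker : ∀ z, T z = 0 ↔ z ∈ Set.range P := by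
      intro z; rw [hPr]; exact Iff.rfl
    have key : ∀ x x' : X, T x = T x' → x - P x = x' - P x' := by
      intro x x' h
      have hz : x - x' ∈ Set.range P := by
        rw [← hker]; rw [map_sub, h, sub_self]
      have hqa := hPqa x' (x - x') hz
      rw [hPfix _ hz] at hqa
      have hx : x' + (x - x') = x := by abel
      rw [hx] at hqa
      rw [hqa]; abel
    -- Banach open mapping: controlled preimages
    have hKcoe : ((LinearMap.range (T : X →ₗ[ℝ] Y) : Submodule ℝ Y) : Set Y) = Set.range ⇑T := by
      ext y; exact ⟨fun ⟨x, hx⟩ => ⟨x, hx⟩, fun ⟨x, hx⟩ => ⟨x, hx⟩⟩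
    haveI : CompleteSpace (LinearMap.range (T : X →ₗ[ℝ] Y) : Submodule ℝ Y) := by
      exact IsClosed.completeSpace_coe (hs := by rw [hKcoe]; exact hcl)
    have hfsurj : Function.Surjective
        (T.codRestrict (LinearMap.range (T : X →ₗ[ℝ] Y)) (fun x => LinearMap.mem_range_self _ x)) := by
      rintro ⟨y, x, rfl⟩
      exact ⟨x, rfl⟩
    obtain ⟨C, hC0, hσex⟩ :=
      (T.codRestrict (LinearMap.range (T : X →ₗ[ℝ] Y)) (fun x => LinearMap.mem_range_self _ x)
        ).exists_preimage_norm_le hfsurj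
    choose σ hσ1 hσ2 using hσex
    have hσT : ∀ q : LinearMap.range (T : X →ₗ[ℝ] Y), T (σ q) = (q : Y) :=
      fun q => congrArg Subtype.val (hσ1 q)
    have hσnorm : ∀ q : LinearMap.range (T : X →ₗ[ℝ] Y), ‖σ q‖ ≤ C * ‖(q : Y)‖ := hσ2
    have hQmem : ∀ y : Y, Q y ∈ LinearMap.range (T : X →ₗ[ℝ] Y) := by
      intro y
      have : Q y ∈ Set.range ⇑T := by rw [← hQr]; exact ⟨y, rfl⟩
      obtain ⟨x, hx⟩ := this
      exact ⟨x, hx⟩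
    set S : LinearMap.range (T : X →ₗ[ℝ] Y) → X := fun q => σ q - P (σ q) with hS
    have key2 : ∀ (q : LinearMap.range (T : X →ₗ[ℝ] Y)) (x : X), T x = (q : Y) → S q = x - P x := by
      intro q x hx
      exact key (σ q) x (by rw [hσT, hx])
    set Th : Y → X := fun y => S ⟨Q y, hQmem y⟩ with hTh
    have hQfix : ∀ y ∈ Set.range Q, Q y = y := by
      rintro y ⟨w, rfl⟩; exact hQp w
    have hTTh : ∀ y, T (Th y) = Q y := by
      intro y
      show T (σ _ - P (σ _)) = Q y
      rw [map_sub]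
      have hp0 : T (P (σ (⟨Q y, hQmem y⟩ : LinearMap.range (T : X →ₗ[ℝ] Y)))) = 0 := by
        rw [hker]; exact ⟨_, rfl⟩
      rw [hp0, sub_zero, hσT]
    refine ⟨Th, ⟨⟨?_, ?_⟩, ?_, ?_⟩⟩
    · -- homogeneity
      intro c y
      have e1 : Th (c • y) = S ⟨Q (c • y), hQmem _⟩ := rfl
      have e2 : T (c • σ (⟨Q y, hQmem y⟩ : LinearMap.range (T : X →ₗ[ℝ] Y))) =
          ((⟨Q (c • y), hQmem _⟩ : LinearMap.range (T : X →ₗ[ℝ] Y)) : Y) := by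
        show T (c • σ _) = Q (c • y)
        rw [map_smul, hσT, hQhom]
      rw [e1, key2 _ _ e2, hPhom, ← smul_sub]
    · -- boundedness
      refine ⟨(1 + MP₀) * C * MQ₀, fun y => ?_⟩
      have hq : ‖((⟨Q y, hQmem y⟩ : LinearMap.range (T : X →ₗ[ℝ] Y)) : Y)‖ = ‖Q y‖ := rfl
      have e1 : ‖σ (⟨Q y, hQmem y⟩ : LinearMap.range (T : X →ₗ[ℝ] Y))‖ ≤ C * ‖Q y‖ := by
        rw [← hq]; exact hσnorm _
      have e2 : ‖Th y‖ ≤ ‖σ (⟨Q y, hQmem y⟩ : LinearMap.range (T : X →ₗ[ℝ] Y))‖ +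
          ‖P (σ (⟨Q y, hQmem y⟩ : LinearMap.range (T : X →ₗ[ℝ] Y)))‖ := norm_sub_le _ _
      have e3 := hMP₀ (σ (⟨Q y, hQmem y⟩ : LinearMap.range (T : X →ₗ[ℝ] Y)))
      have e4 := hMQ₀ y
      have hσnn : (0:ℝ) ≤ ‖σ (⟨Q y, hQmem y⟩ : LinearMap.range (T : X →ₗ[ℝ] Y))‖ := norm_nonneg _
      have hQnn : (0:ℝ) ≤ ‖Q y‖ := norm_nonneg _
      calc ‖Th y‖ ≤ (1 + MP₀) * ‖σ (⟨Q y, hQmem y⟩ : LinearMap.range (T : X →ₗ[ℝ] Y))‖ := by nlinarith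
        _ ≤ (1 + MP₀) * (C * ‖Q y‖) := by
            apply mul_le_mul_of_nonneg_left e1 (by linarith)
        _ ≤ (1 + MP₀) * (C * (MQ₀ * ‖y‖)) := by
            apply mul_le_mul_of_nonneg_left _ (by linarith : (0:ℝ) ≤ 1 + MP₀)
            exact mul_le_mul_of_nonneg_left e4 (le_of_lt hC0)
        _ = (1 + MP₀) * C * MQ₀ * ‖y‖ := by ring
    · -- T Th T = T
      intro x
      have hTx : T x = ((⟨Q (T x), hQmem _⟩ : LinearMap.range (T : X →ₗ[ℝ] Y)) : Y) := by
        show T x = Q (T x)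
        rw [hQfix (T x) (by rw [hQr]; exact ⟨x, rfl⟩)]
      have e1 : Th (T x) = x - P x := key2 _ x hTx
      rw [e1, map_sub]
      have hp0 : T (P x) = 0 := by rw [hker]; exact ⟨x, rfl⟩
      rw [hp0, sub_zero]
    · -- Th T Th = Th
      intro y
      rw [hTTh y]
      show S ⟨Q (Q y), hQmem _⟩ = S ⟨Q y, hQmem _⟩
      congr 1
      exact Subtype.ext (hQp y)
end

section
/- Let X, Y be real Banach spaces and T ∈ B(X,Y) with T ≠ 0. If T has a bounded homogeneous generalized inverse T^h : Y → X, then dist(x, N(T)) ≤ ‖T^h‖·‖Tx‖ for every x ∈ X, and consequently the range R(T) is closed in Y. -/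
open Metric Set

variable {X Y : Type*} [NormedAddCommGroup X] [NormedSpace ℝ X]
  [NormedAddCommGroup Y] [NormedSpace ℝ Y]

/-- key bound: `‖Th y‖ ≤ hnorm Th * ‖y‖` for a bounded homogeneous `Th`, provided the unit
sphere of `Y` is nonempty. -/
lemma hnorm_bound {Th : Y → X} (hTh : BddHomOp Th) {y₀ : Y} (hy₀ : ‖y₀‖ = 1) :
    ∀ y : Y, ‖Th y‖ ≤ hnorm Th * ‖y‖ := by
  obtain ⟨hhom, M, hM⟩ := hTh
  have hne : ((fun x => ‖Th x‖) '' {x : Y | ‖x‖ = 1}).Nonempty := ⟨‖Th y₀‖, ⟨y₀, hy₀, rfl⟩⟩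
  have hbdd : BddAbove ((fun x => ‖Th x‖) '' {x : Y | ‖x‖ = 1}) := by
    refine ⟨M, ?_⟩
    rintro _ ⟨y, hy, rfl⟩
    calc ‖Th y‖ ≤ M * ‖y‖ := hM y
    _ = M := by rw [hy, mul_one]
  intro y
  rcases eq_or_ne y 0 with rfl | hy
  · have h0 : Th 0 = 0 := by
      have := hhom 0 0
      simpa using this
    have hnn : 0 ≤ hnorm Th :=
      le_trans (norm_nonneg _) (le_csSup hbdd ⟨y₀, hy₀, rfl⟩)
    simp [h0]
  · have hny : ‖y‖ ≠ 0 := norm_ne_zero_iff.mpr hy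
    have hunit : ‖(‖y‖⁻¹ • y)‖ = 1 := by
      rw [norm_smul, norm_inv, norm_norm, inv_mul_cancel₀ hny]
    have hle : ‖Th (‖y‖⁻¹ • y)‖ ≤ hnorm Th := le_csSup hbdd ⟨_, hunit, rfl⟩
    have : Th y = ‖y‖ • Th (‖y‖⁻¹ • y) := by
      rw [← hhom, smul_smul, mul_inv_cancel₀ hny, one_smul]
    rw [this, norm_smul, norm_norm, mul_comm]
    exact mul_le_mul_of_nonneg_right hle (norm_nonneg _)

theorem stmt_1 [CompleteSpace X] [CompleteSpace Y] (T : X →L[ℝ] Y) (hT : T ≠ 0)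
    (Th : Y → X) (h : GenInv T Th) :
    (∀ x : X, Metric.infDist x {z : X | T z = 0} ≤ hnorm Th * ‖T x‖) ∧
      IsClosed (Set.range ⇑T) := by
  obtain ⟨hTh, hTThT, hThTTh⟩ := h
  -- there is a unit vector in Y
  obtain ⟨x₀, hx₀⟩ : ∃ x, T x ≠ 0 := by
    by_contra hc
    push_neg at hc
    exact hT (by ext x; simpa using hc x)
  have hy₀ : ‖(‖T x₀‖⁻¹ • T x₀)‖ = 1 := by
    rw [norm_smul, norm_inv, norm_norm, inv_mul_cancel₀ (norm_ne_zero_iff.mpr hx₀)]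
  have hbnd := hnorm_bound hTh hy₀
  have hC : 0 ≤ hnorm Th := by
    have := hbnd (‖T x₀‖⁻¹ • T x₀)
    nlinarith [norm_nonneg (Th (‖T x₀‖⁻¹ • T x₀)), hy₀]
  -- the kernel, as a submodule
  set N : Submodule ℝ X := LinearMap.ker T.toLinearMap with hN
  have hNset : {z : X | T z = 0} = (N : Set X) := by
    ext z; simp [hN, LinearMap.mem_ker]
  -- the distance estimate
  have hdist : ∀ x : X, Metric.infDist x {z : X | T z = 0} ≤ hnorm Th * ‖T x‖ := by
    intro x
    have hmem : x - Th (T x) ∈ {z : X | T z = 0} := by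
      simp only [mem_setOf_eq, map_sub, hTThT x, sub_self]
    calc Metric.infDist x {z : X | T z = 0} ≤ dist x (x - Th (T x)) :=
          infDist_le_dist_of_mem hmem
      _ = ‖Th (T x)‖ := by rw [dist_eq_norm]; simp
      _ ≤ hnorm Th * ‖T x‖ := hbnd _
  refine ⟨hdist, ?_⟩
  -- lift T to the quotient by its kernel
  haveI : IsClosed (N : Set X) := by
    rw [← hNset]; exact isClosed_eq T.continuous continuous_const
  have flin : (X ⧸ N) →ₗ[ℝ] Y := N.liftQ T.toLinearMap (le_refl _)
  set f : (X ⧸ N) →ₗ[ℝ] Y := N.liftQ T.toLinearMap (le_refl _) with hf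
  have hfmk : ∀ x : X, f (Submodule.Quotient.mk x) = T x := fun x => rfl
  have hfb : ∀ q : X ⧸ N, ‖f q‖ ≤ ‖T‖ * ‖q‖ := by
    intro q
    refine le_of_forall_pos_le_add fun δ hδ => ?_
    have hε : (0:ℝ) < δ / (‖T‖ + 1) := by positivity
    obtain ⟨a, rfl, ha⟩ := Submodule.Quotient.norm_mk_lt q hε
    calc ‖f (Submodule.Quotient.mk a)‖ = ‖T a‖ := rfl
      _ ≤ ‖T‖ * ‖a‖ := T.le_opNorm a
      _ ≤ ‖T‖ * (‖(Submodule.Quotient.mk a : X ⧸ N)‖ + δ / (‖T‖ + 1)) :=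
          mul_le_mul_of_nonneg_left (le_of_lt ha) (norm_nonneg T)
      _ = ‖T‖ * ‖(Submodule.Quotient.mk a : X ⧸ N)‖ + ‖T‖ * (δ / (‖T‖ + 1)) := by ring
      _ ≤ ‖T‖ * ‖(Submodule.Quotient.mk a : X ⧸ N)‖ + δ := by
          have h1 : ‖T‖ * (δ / (‖T‖ + 1)) ≤ δ := by
            rw [div_eq_inv_mul]
            have : ‖T‖ * ((‖T‖ + 1)⁻¹ * δ) = (‖T‖ / (‖T‖ + 1)) * δ := by ring
            rw [this]
            have : ‖T‖ / (‖T‖ + 1) ≤ 1 := by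
              rw [div_le_one (by positivity)]; linarith
            nlinarith
          linarith
  set F : (X ⧸ N) →L[ℝ] Y := f.mkContinuous ‖T‖ hfb with hF
  have hanti : AntilipschitzWith (hnorm Th).toNNReal F := by
    apply F.antilipschitz_of_bound
    intro q
    obtain ⟨x, rfl⟩ := Submodule.Quotient.mk_surjective N q
    have hqn : ‖(Submodule.Quotient.mk x : X ⧸ N)‖ = infDist x (N : Set X) :=
      QuotientAddGroup.norm_mk x
    rw [hqn, ← hNset]
    calc Metric.infDist x {z : X | T z = 0} ≤ hnorm Th * ‖T x‖ := hdist x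
      _ = (hnorm Th).toNNReal * ‖F (Submodule.Quotient.mk x)‖ := by
          rw [Real.coe_toNNReal _ hC]; rfl
  have hclosed : IsClosed (Set.range ⇑F) := hanti.isClosed_range F.uniformContinuous
  have hrange : Set.range ⇑F = Set.range ⇑T := by
    ext y
    constructor
    · rintro ⟨q, rfl⟩
      obtain ⟨x, rfl⟩ := Submodule.Quotient.mk_surjective N q
      exact ⟨x, rfl⟩
    · rintro ⟨x, rfl⟩
      exact ⟨Submodule.Quotient.mk x, rfl⟩
  rwa [hrange] at hclosed
end

section
/- Let X, Y be real Banach spaces and T ∈ B(X,Y) with T ≠ 0 and R(T) closed. Assume N(T) is a Chebyshev subspace of X and R(T) is a Chebyshev subspace of Y. Then there exists a bounded homogeneous operator T^h : Y → X such that T T^h T = T, T^h T T^h = T^h, T T^h = π_{R(T)}, and T^h T = I_X − π_{N(T)}. -/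
open Metric Set

variable {X Y : Type*} [NormedAddCommGroup X] [NormedSpace ℝ X]
  [NormedAddCommGroup Y] [NormedSpace ℝ Y]

set_option linter.unusedSectionVars false

lemma my_le_infDist {s : Set X} {x : X} {r : ℝ} (hs : s.Nonempty)
    (h : ∀ y ∈ s, r ≤ dist x y) : r ≤ Metric.infDist x s := by
  by_contra hlt
  push_neg at hlt
  obtain ⟨y, hy, hd⟩ := (Metric.infDist_lt_iff hs).mp hlt
  exact absurd hd (not_lt.2 (h y hy))

lemma infDist_translate (p : Submodule ℝ X) {z : X} (hz : z ∈ p) (x : X) :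
    Metric.infDist (x + z) (p : Set X) = Metric.infDist x (p : Set X) := by
  have key : ∀ (x z : X), z ∈ p →
      Metric.infDist (x + z) (p : Set X) ≤ Metric.infDist x (p : Set X) := by
    intro x z hz
    refine my_le_infDist ⟨0, p.zero_mem⟩ fun w hw => ?_
    have h1 : dist x w = dist (x + z) (w + z) := (dist_add_right x w z).symm
    rw [h1]
    exact Metric.infDist_le_dist_of_mem (p.add_mem hw hz)
  refine le_antisymm (key x z hz) ?_
  have := key (x + z) (-z) (p.neg_mem hz)
  simpa using this

lemma infDist_smul_aux (p : Submodule ℝ X) (c : ℝ) (x : X) :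
    Metric.infDist (c • x) (p : Set X) = |c| * Metric.infDist x (p : Set X) := by
  rcases eq_or_ne c 0 with rfl | hc
  · simp [Metric.infDist_zero_of_mem p.zero_mem]
  have hc' : (0:ℝ) < |c| := abs_pos.2 hc
  apply le_antisymm
  · have h : |c|⁻¹ * Metric.infDist (c • x) (p : Set X) ≤ Metric.infDist x (p : Set X) := by
      refine my_le_infDist ⟨0, p.zero_mem⟩ fun w hw => ?_
      rw [inv_mul_le_iff₀ hc']
      have h2 : |c| * dist x w = dist (c • x) (c • w) := by
        rw [dist_smul₀, Real.norm_eq_abs]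
      rw [h2]
      exact Metric.infDist_le_dist_of_mem (p.smul_mem c hw)
    have := (inv_mul_le_iff₀ hc').mp h
    linarith [this]
  · refine my_le_infDist ⟨0, p.zero_mem⟩ fun w hw => ?_
    have hw' : c⁻¹ • w ∈ p := p.smul_mem _ hw
    have h3 : dist (c • x) w = |c| * dist x (c⁻¹ • w) := by
      conv_lhs => rw [show w = c • (c⁻¹ • w) from (smul_inv_smul₀ hc w).symm]
      rw [dist_smul₀, Real.norm_eq_abs]
    rw [h3]
    exact mul_le_mul_of_nonneg_left (Metric.infDist_le_dist_of_mem hw') hc'.le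

lemma proj_mem_eq {V : Set X} (hC : IsChebyshev V) {π : X → X} (hπ : IsMetricProjOn V π)
    {v : X} (hv : v ∈ V) : π v = v :=
  (hC v).unique (hπ v) ⟨hv, by simp [Metric.infDist_zero_of_mem hv]⟩

lemma proj_translate (p : Submodule ℝ X) (hC : IsChebyshev (p : Set X)) {π : X → X}
    (hπ : IsMetricProjOn (p : Set X) π) (x : X) {z : X} (hz : z ∈ p) :
    π (x + z) = π x + z := by
  refine (hC (x + z)).unique (hπ (x + z)) ⟨p.add_mem (hπ x).1 hz, ?_⟩
  have h1 : x + z - (π x + z) = x - π x := by abel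
  rw [h1, (hπ x).2, infDist_translate p hz x]

lemma proj_smul (p : Submodule ℝ X) (hC : IsChebyshev (p : Set X)) {π : X → X}
    (hπ : IsMetricProjOn (p : Set X) π) (c : ℝ) (x : X) : π (c • x) = c • π x := by
  rcases eq_or_ne c 0 with rfl | hc
  · simp [proj_mem_eq hC hπ p.zero_mem]
  refine (hC (c • x)).unique (hπ (c • x)) ⟨p.smul_mem c (hπ x).1, ?_⟩
  rw [infDist_smul_aux, ← smul_sub, norm_smul, Real.norm_eq_abs, (hπ x).2]

theorem stmt_2 [CompleteSpace X] [CompleteSpace Y] (T : X →L[ℝ] Y) (hT : T ≠ 0)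
    (hcl : IsClosed (Set.range ⇑T))
    (hN : IsChebyshev {x : X | T x = 0}) (hR : IsChebyshev (Set.range ⇑T))
    (πN : X → X) (hπN : IsMetricProjOn {x : X | T x = 0} πN)
    (πR : Y → Y) (hπR : IsMetricProjOn (Set.range ⇑T) πR) :
    ∃ Th : Y → X, BddHomOp Th ∧ (∀ x, T (Th (T x)) = T x) ∧ (∀ y, Th (T (Th y)) = Th y) ∧
      (∀ y, T (Th y) = πR y) ∧ (∀ x, Th (T x) = x - πN x) := by
  classical
  have hNs : {x : X | T x = 0} = ((LinearMap.ker (T : X →ₗ[ℝ] Y) : Submodule ℝ X) : Set X) := by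
    ext x; simp [LinearMap.mem_ker]
  have hRs : Set.range ⇑T = ((LinearMap.range (T : X →ₗ[ℝ] Y) : Submodule ℝ Y) : Set Y) := by
    ext y; simp [LinearMap.mem_range]
  have hN' : IsChebyshev ((LinearMap.ker (T : X →ₗ[ℝ] Y) : Submodule ℝ X) : Set X) := hNs ▸ hN
  have hR' : IsChebyshev ((LinearMap.range (T : X →ₗ[ℝ] Y) : Submodule ℝ Y) : Set Y) := hRs ▸ hR
  have hπN' : IsMetricProjOn ((LinearMap.ker (T : X →ₗ[ℝ] Y) : Submodule ℝ X) : Set X) πN := hNs ▸ hπN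
  have hπR' : IsMetricProjOn ((LinearMap.range (T : X →ₗ[ℝ] Y) : Submodule ℝ Y) : Set Y) πR := hRs ▸ hπR
  have hTπN : ∀ x : X, T (πN x) = 0 := fun x => (hπN x).1
  have pre : ∀ y : Y, ∃ x : X, T x = πR y := fun y => (hπR y).1
  set Th : Y → X := fun y => Classical.choose (pre y) - πN (Classical.choose (pre y)) with hTh
  -- well-definedness
  have key : ∀ x x' : X, T x = T x' → x - πN x = x' - πN x' := by
    intro x x' h
    have hzmem : x' - x ∈ LinearMap.ker (T : X →ₗ[ℝ] Y) := by
      simp [LinearMap.mem_ker, map_sub, h]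
    have h2 := proj_translate (LinearMap.ker (T : X →ₗ[ℝ] Y)) hN' hπN' x hzmem
    have h3 : x + (x' - x) = x' := by abel
    rw [h3] at h2
    rw [h2]; abel
  have main : ∀ (y : Y) (x : X), T x = πR y → Th y = x - πN x := by
    intro y x hx
    exact key (Classical.choose (pre y)) x (by rw [Classical.choose_spec (pre y), hx])
  have fixR : ∀ y ∈ Set.range ⇑T, πR y = y := fun y hy => proj_mem_eq hR hπR hy
  have hTTh : ∀ y, T (Th y) = πR y := by
    intro y
    have hx := Classical.choose_spec (pre y)
    show T (Classical.choose (pre y) - πN (Classical.choose (pre y))) = πR y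
    rw [map_sub, hTπN, hx, sub_zero]
  have hThT : ∀ x, Th (T x) = x - πN x := fun x =>
    main (T x) x (fixR (T x) ⟨x, rfl⟩).symm
  refine ⟨Th, ⟨?_, ?_⟩, ?_, ?_, hTTh, hThT⟩
  · -- homogeneity
    intro c y
    have hx := Classical.choose_spec (pre y)
    set x := Classical.choose (pre y)
    have h1 : πR (c • y) = c • πR y := proj_smul (LinearMap.range (T : X →ₗ[ℝ] Y)) hR' hπR' c y
    have h2 : T (c • x) = πR (c • y) := by rw [map_smul, hx, h1]
    rw [main (c • y) (c • x) h2]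
    have h3 : πN (c • x) = c • πN x := proj_smul (LinearMap.ker (T : X →ₗ[ℝ] Y)) hN' hπN' c x
    rw [h3, ← smul_sub]
  · -- boundedness
    haveI : CompleteSpace (LinearMap.range (T : X →ₗ[ℝ] Y)) :=
      (hRs ▸ hcl : IsClosed ((LinearMap.range (T : X →ₗ[ℝ] Y) : Submodule ℝ Y) : Set Y)).completeSpace_coe
    set f : X →L[ℝ] (LinearMap.range (T : X →ₗ[ℝ] Y)) :=
      T.codRestrict (LinearMap.range (T : X →ₗ[ℝ] Y)) (fun x => LinearMap.mem_range_self (T : X →ₗ[ℝ] Y) x) with hf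
    have hsurj : Function.Surjective f := by
      rintro ⟨y, hy⟩
      obtain ⟨x, hx⟩ := LinearMap.mem_range.mp hy
      exact ⟨x, Subtype.ext hx⟩
    obtain ⟨C, hC0, hCspec⟩ := f.exists_preimage_norm_le hsurj
    refine ⟨2 * C, fun y => ?_⟩
    have hmem : πR y ∈ LinearMap.range (T : X →ₗ[ℝ] Y) := by
      have := (hπR y).1; rwa [hRs] at this
    obtain ⟨x, hfx, hxn⟩ := hCspec ⟨πR y, hmem⟩
    have hTx : T x = πR y := congrArg Subtype.val hfx
    have hnw : ‖(⟨πR y, hmem⟩ : LinearMap.range (T : X →ₗ[ℝ] Y))‖ = ‖πR y‖ := rfl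
    rw [hnw] at hxn
    have h0N : (0 : X) ∈ {x : X | T x = 0} := by simp
    have h0R : (0 : Y) ∈ Set.range ⇑T := ⟨0, map_zero T⟩
    have hb1 : ‖Th y‖ ≤ ‖x‖ := by
      rw [main y x hTx, (hπN x).2]
      calc Metric.infDist x {x : X | T x = 0} ≤ dist x 0 :=
            Metric.infDist_le_dist_of_mem h0N
        _ = ‖x‖ := by simp
    have hb2 : ‖πR y‖ ≤ 2 * ‖y‖ := by
      have h4 : ‖y - πR y‖ ≤ ‖y‖ := by
        rw [(hπR y).2]
        calc Metric.infDist y (Set.range ⇑T) ≤ dist y 0 :=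
              Metric.infDist_le_dist_of_mem h0R
          _ = ‖y‖ := by simp
      calc ‖πR y‖ = ‖y - (y - πR y)‖ := by congr 1; abel
        _ ≤ ‖y‖ + ‖y - πR y‖ := norm_sub_le _ _
        _ ≤ 2 * ‖y‖ := by linarith
    calc ‖Th y‖ ≤ ‖x‖ := hb1
      _ ≤ C * ‖πR y‖ := hxn
      _ ≤ C * (2 * ‖y‖) := by
          exact mul_le_mul_of_nonneg_left hb2 hC0.le
      _ = 2 * C * ‖y‖ := by ring
  · -- T Th T = T
    intro x
    rw [hThT x, map_sub, hTπN, sub_zero]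
  · -- Th T Th = Th
    intro y
    rw [hTTh y]
    have hx := Classical.choose_spec (pre y)
    have hfix : πR (πR y) = πR y := fixR (πR y) (by rw [← hx]; exact ⟨_, rfl⟩)
    have := main (πR y) (Classical.choose (pre y)) (by rw [hx, hfix])
    rw [this]
end

section
/- Let X, Y be real Banach spaces and T ∈ B(X,Y) with T ≠ 0. Assume T has a bounded homogeneous generalized inverse T^h : Y → X, and that N(T) is a Chebyshev subspace of X and R(T) is a Chebyshev subspace of Y. Then any map S : Y → X satisfying T S T = T, S T S = S, T S = π_{R(T)}, and S T = I_X − π_{N(T)} is equal to the map (I_X − π_{N(T)}) ∘ T^h ∘ π_{R(T)}; in particular the Moore–Penrose metric generalized inverse of T is T^M = (I_X − π_{N(T)}) T^h π_{R(T)}. -/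
open Metric Set

variable {X Y : Type*} [NormedAddCommGroup X] [NormedSpace ℝ X]
  [NormedAddCommGroup Y] [NormedSpace ℝ Y]

theorem stmt_3 [CompleteSpace X] [CompleteSpace Y] (T : X →L[ℝ] Y) (hT : T ≠ 0)
    (Th : Y → X) (hTh : GenInv T Th)
    (hN : IsChebyshev {x : X | T x = 0}) (hR : IsChebyshev (Set.range ⇑T))
    (πN : X → X) (hπN : IsMetricProjOn {x : X | T x = 0} πN)
    (πR : Y → Y) (hπR : IsMetricProjOn (Set.range ⇑T) πR)
    (S : Y → X)
    (hS1 : ∀ x, T (S (T x)) = T x) (hS2 : ∀ y, S (T (S y)) = S y)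
    (hS3 : ∀ y, T (S y) = πR y) (hS4 : ∀ x, S (T x) = x - πN x) :
    S = fun y => Th (πR y) - πN (Th (πR y)) := by
  funext y
  obtain ⟨u, hu⟩ := (hπR y).1
  have h1 : T (Th (πR y)) = πR y := by rw [← hu, hTh.2.1]
  have h2 : Th (πR y) - πN (Th (πR y)) = S (T (Th (πR y))) := (hS4 _).symm
  rw [h2, h1, ← hS3, hS2]
end

section
/- Let X, Y be real Banach spaces, T : X → Y and S : Y → X bounded homogeneous operators such that T is quasi-additive on R(S) and S is quasi-additive on R(T). Then I_Y + T∘S has a bounded homogeneous two-sided inverse (i.e. there is a bounded homogeneous Φ : Y → Y with (I_Y + TS)Φ = Φ(I_Y + TS) = I_Y) if and only if I_X + S∘T has a bounded homogeneous two-sided inverse. -/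
open Metric Set

variable {X Y : Type*} [NormedAddCommGroup X] [NormedSpace ℝ X]
  [NormedAddCommGroup Y] [NormedSpace ℝ Y]

lemma bddHomOp_neg_apply {F : X → Y} (hF : BddHomOp F) (x : X) : F (-x) = -F x := by
  have := hF.1 (-1) x
  simpa using this

lemma stmt4_aux (T : X → Y) (S : Y → X)
    (hT : BddHomOp T) (hS : BddHomOp S)
    (hTq : QuasiAdditiveOn T (Set.range S))
    (h : ∃ Φ : Y → Y, BddHomOp Φ ∧ (∀ y, Φ y + T (S (Φ y)) = y) ∧ (∀ y, Φ (y + T (S y)) = y)) :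
    (∃ Ψ : X → X, BddHomOp Ψ ∧ (∀ x, Ψ x + S (T (Ψ x)) = x) ∧ (∀ x, Ψ (x + S (T x)) = x)) := by
  obtain ⟨Φ, hΦ, h1, h2⟩ := h
  refine ⟨fun x => x - S (Φ (T x)), ⟨?_, ?_⟩, ?_, ?_⟩
  · intro c x
    simp only [hT.1, hΦ.1, hS.1, smul_sub]
  · obtain ⟨MT, hMT⟩ := hT.2
    obtain ⟨MS, hMS⟩ := hS.2
    obtain ⟨MP, hMP⟩ := hΦ.2
    refine ⟨1 + max MS 0 * (max MP 0 * max MT 0), fun x => ?_⟩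
    have b1 : ‖T x‖ ≤ max MT 0 * ‖x‖ :=
      (hMT x).trans (by nlinarith [norm_nonneg x, le_max_left MT (0:ℝ)])
    have b2 : ‖Φ (T x)‖ ≤ max MP 0 * (max MT 0 * ‖x‖) := by
      refine (hMP (T x)).trans ?_
      have h0 : MP * ‖T x‖ ≤ max MP 0 * ‖T x‖ := by
        nlinarith [norm_nonneg (T x), le_max_left MP (0:ℝ)]
      refine h0.trans ?_
      have : (0:ℝ) ≤ max MP 0 := le_max_right _ _
      nlinarith
    have b3 : ‖S (Φ (T x))‖ ≤ max MS 0 * (max MP 0 * (max MT 0 * ‖x‖)) := by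
      refine (hMS _).trans ?_
      have h0 : MS * ‖Φ (T x)‖ ≤ max MS 0 * ‖Φ (T x)‖ := by
        nlinarith [norm_nonneg (Φ (T x)), le_max_left MS (0:ℝ)]
      refine h0.trans ?_
      have : (0:ℝ) ≤ max MS 0 := le_max_right _ _
      nlinarith
    calc ‖x - S (Φ (T x))‖ ≤ ‖x‖ + ‖S (Φ (T x))‖ := norm_sub_le _ _
      _ ≤ ‖x‖ + max MS 0 * (max MP 0 * (max MT 0 * ‖x‖)) := by linarith
      _ = (1 + max MS 0 * (max MP 0 * max MT 0)) * ‖x‖ := by ring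
  · intro x
    have key : T (x - S (Φ (T x))) = Φ (T x) := by
      have hq : T (x + -S (Φ (T x))) = T x + T (-S (Φ (T x))) := by
        have : -S (Φ (T x)) = S (-(Φ (T x))) := (bddHomOp_neg_apply hS _).symm
        rw [this]
        exact hTq x _ ⟨-(Φ (T x)), rfl⟩
      have hn : T (-S (Φ (T x))) = -T (S (Φ (T x))) := bddHomOp_neg_apply hT _
      have h3 : T (S (Φ (T x))) = T x - Φ (T x) := eq_sub_of_add_eq' (h1 (T x))
      rw [sub_eq_add_neg, hq, hn, h3]
      abel
    rw [key]
    module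
  · intro x
    have key : T (x + S (T x)) = T x + T (S (T x)) := hTq x _ ⟨T x, rfl⟩
    have h2' := h2 (T x)
    simp only [key, h2']
    abel

theorem stmt_4 [CompleteSpace X] [CompleteSpace Y] (T : X → Y) (S : Y → X)
    (hT : BddHomOp T) (hS : BddHomOp S)
    (hTq : QuasiAdditiveOn T (Set.range S)) (hSq : QuasiAdditiveOn S (Set.range T)) :
    (∃ Φ : Y → Y, BddHomOp Φ ∧ (∀ y, Φ y + T (S (Φ y)) = y) ∧ (∀ y, Φ (y + T (S y)) = y)) ↔
    (∃ Ψ : X → X, BddHomOp Ψ ∧ (∀ x, Ψ x + S (T (Ψ x)) = x) ∧ (∀ x, Ψ (x + S (T x)) = x)) := by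
  exact ⟨stmt4_aux T S hT hS hTq, stmt4_aux S T hS hT hSq⟩
end

section
/- Let X, Y be real Banach spaces, T ∈ B(X,Y) with a bounded homogeneous generalized inverse T^h : Y → X, and let δT ∈ B(X,Y) be such that T^h is quasi-additive on R(δT) and I_X + T^h∘δT is invertible in B(X,X). Then I_Y + δT∘T^h has a bounded homogeneous two-sided inverse, the map Φ = T^h ∘ (I_Y + δT T^h)^{-1} equals (I_X + T^h δT)^{-1} ∘ T^h, Φ is a bounded homogeneous operator, and R(Φ) = R(T^h), N(Φ) = N(T^h) (where N(Φ) = {y : Φ(y)=0}). -/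
open Metric Set

variable {X Y : Type*} [NormedAddCommGroup X] [NormedSpace ℝ X]
  [NormedAddCommGroup Y] [NormedSpace ℝ Y]

theorem stmt_5 [CompleteSpace X] [CompleteSpace Y] (T δT : X →L[ℝ] Y)
    (Th : Y → X) (hTh : GenInv T Th)
    (hq : QuasiAdditiveOn Th (Set.range ⇑δT))
    (A : (X →L[ℝ] X)ˣ) (hA : ∀ x, (A : X →L[ℝ] X) x = x + Th (δT x)) :
    (∃ Ψ : Y → Y, BddHomOp Ψ ∧ (∀ y, Ψ y + δT (Th (Ψ y)) = y) ∧
      (∀ y, Ψ (y + δT (Th y)) = y)) ∧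
    ∀ Ψ : Y → Y, ((∀ y, Ψ y + δT (Th (Ψ y)) = y) ∧ (∀ y, Ψ (y + δT (Th y)) = y)) →
      ((∀ y, Th (Ψ y) = (↑A⁻¹ : X →L[ℝ] X) (Th y)) ∧
       BddHomOp (fun y => Th (Ψ y)) ∧
       Set.range (fun y => Th (Ψ y)) = Set.range Th ∧
       {y | Th (Ψ y) = 0} = {y | Th y = 0}) := by
  obtain ⟨⟨homTh, M, hM⟩, hTST, hSTS⟩ := hTh
  have hinv : ∀ x, (↑A⁻¹ : X →L[ℝ] X) ((A : X →L[ℝ] X) x) = x := by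
    intro x
    have h : ((↑A⁻¹ * ↑A : X →L[ℝ] X)) x = x := by rw [A.inv_mul]; rfl
    exact h
  have hAinv : ∀ x, (A : X →L[ℝ] X) ((↑A⁻¹ : X →L[ℝ] X) x) = x := by
    intro x
    have h : ((↑A * ↑A⁻¹ : X →L[ℝ] X)) x = x := by rw [A.mul_inv]; rfl
    exact h
  have hneg : ∀ x, Th (-x) = -Th x := by
    intro x
    simpa using homTh (-1) x
  -- Th (δT (A⁻¹ u)) = u - A⁻¹ u
  have hkey : ∀ u, Th (δT ((↑A⁻¹ : X →L[ℝ] X) u)) = u - (↑A⁻¹ : X →L[ℝ] X) u := by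
    intro u
    have h := hA ((↑A⁻¹ : X →L[ℝ] X) u)
    rw [hAinv] at h
    linear_combination (norm := abel) h.symm
  set Ψ₀ : Y → Y := fun y => y - δT ((↑A⁻¹ : X →L[ℝ] X) (Th y)) with hΨ₀
  have hThΨ₀ : ∀ y, Th (Ψ₀ y) = (↑A⁻¹ : X →L[ℝ] X) (Th y) := by
    intro y
    have hmem : -(δT ((↑A⁻¹ : X →L[ℝ] X) (Th y))) ∈ Set.range ⇑δT :=
      ⟨-((↑A⁻¹ : X →L[ℝ] X) (Th y)), by simp⟩
    have h1 : Ψ₀ y = y + -(δT ((↑A⁻¹ : X →L[ℝ] X) (Th y))) := by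
      simp [hΨ₀, sub_eq_add_neg]
    rw [h1, hq y _ hmem, hneg, hkey]
    abel
  refine ⟨⟨Ψ₀, ⟨?_, ?_⟩, ?_, ?_⟩, ?_⟩
  · intro c y
    simp only [hΨ₀, homTh, map_smul, smul_sub]
  · refine ⟨1 + ‖δT‖ * ‖(↑A⁻¹ : X →L[ℝ] X)‖ * M, fun y => ?_⟩
    have h1 : ‖δT ((↑A⁻¹ : X →L[ℝ] X) (Th y))‖ ≤ ‖δT‖ * (‖(↑A⁻¹ : X →L[ℝ] X)‖ * ‖Th y‖) :=
      le_trans (δT.le_opNorm _) (by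
        have := (↑A⁻¹ : X →L[ℝ] X).le_opNorm (Th y)
        exact mul_le_mul_of_nonneg_left this (norm_nonneg _))
    have h2 : ‖Th y‖ ≤ M * ‖y‖ := hM y
    have h3 : ‖Ψ₀ y‖ ≤ ‖y‖ + ‖δT ((↑A⁻¹ : X →L[ℝ] X) (Th y))‖ := norm_sub_le _ _
    have h4 : (0:ℝ) ≤ ‖δT‖ * ‖(↑A⁻¹ : X →L[ℝ] X)‖ := by positivity
    nlinarith [norm_nonneg y, norm_nonneg (Th y)]
  · intro y
    rw [hThΨ₀]
    simp [hΨ₀]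
  · intro y
    have hmem : δT (Th y) ∈ Set.range ⇑δT := ⟨Th y, rfl⟩
    have hTw : Th (y + δT (Th y)) = (A : X →L[ℝ] X) (Th y) := by
      rw [hq y _ hmem, hA]
    simp only [hΨ₀, hTw, hinv]
    abel
  · rintro Ψ ⟨h1, h2⟩
    have ha : ∀ y, Th (Ψ y) = (↑A⁻¹ : X →L[ℝ] X) (Th y) := by
      intro y
      have hmem : δT (Th (Ψ y)) ∈ Set.range ⇑δT := ⟨Th (Ψ y), rfl⟩
      have hAeq : (A : X →L[ℝ] X) (Th (Ψ y)) = Th y := by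
        rw [hA, ← hq (Ψ y) _ hmem, h1]
      have := congrArg (↑A⁻¹ : X →L[ℝ] X) hAeq
      rwa [hinv] at this
    refine ⟨ha, ⟨?_, ?_⟩, ?_, ?_⟩
    · intro c y
      simp only [ha, homTh, map_smul]
    · refine ⟨‖(↑A⁻¹ : X →L[ℝ] X)‖ * M, fun y => ?_⟩
      simp only [ha]
      calc ‖(↑A⁻¹ : X →L[ℝ] X) (Th y)‖ ≤ ‖(↑A⁻¹ : X →L[ℝ] X)‖ * ‖Th y‖ :=
            (↑A⁻¹ : X →L[ℝ] X).le_opNorm _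
        _ ≤ ‖(↑A⁻¹ : X →L[ℝ] X)‖ * (M * ‖y‖) :=
            mul_le_mul_of_nonneg_left (hM y) (norm_nonneg _)
        _ = ‖(↑A⁻¹ : X →L[ℝ] X)‖ * M * ‖y‖ := by ring
    · ext x
      constructor
      · rintro ⟨y, rfl⟩
        exact ⟨Ψ y, rfl⟩
      · rintro ⟨y, rfl⟩
        exact ⟨y + δT (Th y), by show Th (Ψ (y + δT (Th y))) = Th y; rw [h2 y]⟩
    · ext y
      simp only [Set.mem_setOf_eq, ha]
      constructor
      · intro h
        have := congrArg (A : X →L[ℝ] X) h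
        rwa [hAinv, map_zero] at this
      · intro h
        rw [h, map_zero]
end

section
/- Let X, Y be real Banach spaces, T ∈ B(X,Y) with a bounded homogeneous generalized inverse T^h : Y → X, and let δT ∈ B(X,Y) be such that T^h is quasi-additive on R(δT) and I_X + T^h∘δT is invertible in B(X,X). Put T̄ = T + δT. If R(T̄) ∩ N(T^h) = {0}, then N(T̄) = (I_X + T^h δT)^{-1}(N(T)), i.e. the kernel of T̄ is the image of N(T) under the inverse of I_X + T^h δT. -/
open Metric Set

variable {X Y : Type*} [NormedAddCommGroup X] [NormedSpace ℝ X]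
  [NormedAddCommGroup Y] [NormedSpace ℝ Y]

theorem stmt_6 [CompleteSpace X] [CompleteSpace Y] (T δT : X →L[ℝ] Y)
    (Th : Y → X) (hTh : GenInv T Th)
    (hq : QuasiAdditiveOn Th (Set.range ⇑δT))
    (A : (X →L[ℝ] X)ˣ) (hA : ∀ x, (A : X →L[ℝ] X) x = x + Th (δT x))
    (hstab : Set.range ⇑(T + δT) ∩ {y : Y | Th y = 0} = {0}) :
    {x : X | (T + δT) x = 0} = (↑A⁻¹ : X →L[ℝ] X) '' {x : X | T x = 0} := by
  obtain ⟨⟨hhom, _⟩, hTST, hSTS⟩ := hTh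
  have hThneg : ∀ y, Th (-y) = - Th y := by
    intro y; have := hhom (-1) y; simpa using this
  have hinvmul : ∀ x : X, (↑A⁻¹ : X →L[ℝ] X) ((A : X →L[ℝ] X) x) = x := by
    intro x
    exact DFunLike.congr_fun A.inv_mul x
  have hmulinv : ∀ x : X, (A : X →L[ℝ] X) ((↑A⁻¹ : X →L[ℝ] X) x) = x := by
    intro x
    exact DFunLike.congr_fun A.mul_inv x
  ext x
  simp only [Set.mem_setOf_eq, Set.mem_image]
  constructor
  · intro hx
    have hx' : T x + δT x = 0 := by simpa using hx
    have hδ : δT x = -(T x) := eq_neg_of_add_eq_zero_right hx'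
    refine ⟨(A : X →L[ℝ] X) x, ?_, hinvmul x⟩
    rw [hA, map_add, hδ, hThneg, map_neg, hTST]
    abel
  · rintro ⟨n, hn, rfl⟩
    set x := (↑A⁻¹ : X →L[ℝ] X) n with hxdef
    have hAx : x + Th (δT x) = n := by rw [← hA]; exact hmulinv n
    have hTx : T x = -(T (Th (δT x))) := by
      have := congrArg T hAx
      rw [map_add, hn] at this
      exact eq_neg_of_add_eq_zero_left this
    have hw : (T + δT) x = -(T (Th (δT x))) + δT x := by
      simp [ContinuousLinearMap.add_apply, hTx]
    have hThw : Th ((T + δT) x) = 0 := by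
      rw [hw, hq _ _ (Set.mem_range_self x), hThneg, hSTS]
      abel
    have hmem : (T + δT) x ∈ Set.range ⇑(T + δT) ∩ {y : Y | Th y = 0} :=
      ⟨Set.mem_range_self x, hThw⟩
    rw [hstab] at hmem
    simpa using hmem
end

section
/- Let X, Y be real Banach spaces, T ∈ B(X,Y) with a bounded homogeneous generalized inverse T^h : Y → X, and let δT ∈ B(X,Y) be such that T^h is quasi-additive on R(δT) and I_X + T^h∘δT is invertible in B(X,X). Put T̄ = T + δT. If R(T̄) ∩ N(T^h) = {0}, then R(T̄) = (I_Y + δT T^h)(R(T)), i.e. the range of T̄ is the image of R(T) under I_Y + δT∘T^h. -/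
open Metric Set

variable {X Y : Type*} [NormedAddCommGroup X] [NormedSpace ℝ X]
  [NormedAddCommGroup Y] [NormedSpace ℝ Y]

theorem stmt_7 [CompleteSpace X] [CompleteSpace Y] (T δT : X →L[ℝ] Y)
    (Th : Y → X) (hTh : GenInv T Th)
    (hq : QuasiAdditiveOn Th (Set.range ⇑δT))
    (A : (X →L[ℝ] X)ˣ) (hA : ∀ x, (A : X →L[ℝ] X) x = x + Th (δT x))
    (hstab : Set.range ⇑(T + δT) ∩ {y : Y | Th y = 0} = {0}) :
    Set.range ⇑(T + δT) = (fun y => y + δT (Th y)) '' Set.range ⇑T := by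
  obtain ⟨⟨hhom, -⟩, hTT, hThT⟩ := hTh
  have hneg : ∀ w : Y, Th (-w) = - Th w := by
    intro w
    have := hhom (-1) w
    simpa using this
  have hAIA : ∀ x : X, (↑A⁻¹ : X →L[ℝ] X) ((A : X →L[ℝ] X) x) = x := by
    intro x
    change ((↑A⁻¹ * ↑A : X →L[ℝ] X)) x = x
    rw [A.inv_mul]; rfl
  have hAAI : ∀ x : X, (A : X →L[ℝ] X) ((↑A⁻¹ : X →L[ℝ] X) x) = x := by
    intro x
    change ((↑A * ↑A⁻¹ : X →L[ℝ] X)) x = x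
    rw [A.mul_inv]; rfl
  ext y
  constructor
  · rintro ⟨x, rfl⟩
    set v : X := (↑A⁻¹ : X →L[ℝ] X) (x - Th (T x)) with hv
    have hAv : v + Th (δT v) = x - Th (T x) := by
      have h1 := hAAI (x - Th (T x))
      rw [hA] at h1
      exact h1
    have hveq : v = x - Th (T x) - Th (δT v) := by
      rw [← hAv]; abel
    have hTv : T v = - T (Th (δT v)) := by
      have h1 : T (v + Th (δT v)) = T (x - Th (T x)) := by rw [hAv]
      rw [map_add, map_sub, hTT, sub_self] at h1
      exact eq_neg_of_add_eq_zero_left h1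
    have hThTv : Th (T v) = - Th (δT v) := by
      rw [hTv, ← neg_one_smul ℝ (T (Th (δT v))), hhom, hThT]
      simp
    have hTbv : Th ((T + δT) v) = 0 := by
      have := hq (T v) (δT v) ⟨v, rfl⟩
      rw [ContinuousLinearMap.add_apply, this, hThTv]
      simp
    have hzero : (T + δT) v = 0 := by
      have hmem : (T + δT) v ∈ Set.range ⇑(T + δT) ∩ {y : Y | Th y = 0} :=
        ⟨⟨v, rfl⟩, hTbv⟩
      rw [hstab] at hmem
      exact hmem
    set z : X := (↑A⁻¹ : X →L[ℝ] X) (Th ((T + δT) x)) with hz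
    have hAx : (A : X →L[ℝ] X) x = Th ((T + δT) x) + (x - Th (T x)) := by
      rw [hA]
      have h2 : Th ((T + δT) x) = Th (T x) + Th (δT x) := by
        rw [ContinuousLinearMap.add_apply]
        exact hq (T x) (δT x) ⟨x, rfl⟩
      rw [h2]; abel
    have hxzv : x = z + v := by
      have := hAIA x
      rw [hAx, map_add] at this
      rw [hz, hv, this]
    have hyz : (T + δT) x = (T + δT) z := by
      conv_lhs => rw [hxzv]
      rw [map_add, hzero, add_zero]
    have hAz : z + Th (δT z) = Th ((T + δT) x) := by
      have h1 := hAAI (Th ((T + δT) x))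
      rw [hA] at h1
      exact h1
    have hzrange : z = Th ((T + δT) x - δT z) := by
      have h1 : (T + δT) x - δT z = (T + δT) x + δT (-z) := by
        rw [map_neg]; abel
      rw [h1, hq _ (δT (-z)) ⟨-z, rfl⟩, map_neg, hneg, ← hAz]
      abel
    have hThTz : Th (T z) = z := by
      conv_lhs => rw [hzrange]
      rw [hThT, ← hzrange]
    refine ⟨T z, ⟨z, rfl⟩, ?_⟩
    simp only [hThTz]
    rw [hyz, ContinuousLinearMap.add_apply]
  · rintro ⟨w, ⟨x, rfl⟩, rfl⟩
    refine ⟨Th (T x), ?_⟩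
    simp [ContinuousLinearMap.add_apply, hTT]
end

section
/- Let X, Y be real Banach spaces, T ∈ B(X,Y) with a bounded homogeneous generalized inverse T^h : Y → X, and let δT ∈ B(X,Y) be such that T^h is quasi-additive on R(δT) and ‖T^h δT‖ < 1 (so that I_X + T^h δT is invertible in B(X,X)). Put T̄ = T + δT. If N(T) ⊆ N(δT), then T̄ has a bounded homogeneous generalized inverse given by T̄^h = T^h ∘ (I_Y + δT T^h)^{-1} = (I_X + T^h δT)^{-1} ∘ T^h. -/
open Metric Set

variable {X Y : Type*} [NormedAddCommGroup X] [NormedSpace ℝ X]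
  [NormedAddCommGroup Y] [NormedSpace ℝ Y]

theorem stmt_9 [CompleteSpace X] [CompleteSpace Y] (T δT : X →L[ℝ] Y)
    (Th : Y → X) (hTh : GenInv T Th)
    (hq : QuasiAdditiveOn Th (Set.range ⇑δT))
    (A : X →L[ℝ] X) (hA : ∀ x, A x = Th (δT x)) (hAn : ‖A‖ < 1)
    (hker : {x : X | T x = 0} ⊆ {x : X | δT x = 0}) :
    ∃ Ψ : Y → Y, (∀ y, Ψ y + δT (Th (Ψ y)) = y) ∧ (∀ y, Ψ (y + δT (Th y)) = y) ∧
      GenInv (T + δT) (fun y => Th (Ψ y)) ∧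
      (∀ y, Th (Ψ y) + A (Th (Ψ y)) = Th y) := by
  obtain ⟨⟨hhom, M, hM⟩, hg1, hg2⟩ := hTh
  have hAn' : ‖-A‖ < 1 := by rwa [norm_neg]
  set u : (X →L[ℝ] X)ˣ := Units.oneSub (-A) hAn' with hu
  set C : X →L[ℝ] X := ↑u⁻¹ with hC
  -- basic facts about C
  have hC1 : ∀ x : X, C x + A (C x) = x := by
    intro x
    have h := congrArg (fun f : X →L[ℝ] X => f x) u.mul_inv
    simpa [hu, hC, Units.oneSub, ContinuousLinearMap.mul_apply, sub_neg_eq_add,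
      ContinuousLinearMap.add_apply, add_comm] using h
  have hC2 : ∀ x : X, C (x + A x) = x := by
    intro x
    have h := congrArg (fun f : X →L[ℝ] X => f x) u.inv_mul
    simpa [hu, hC, Units.oneSub, ContinuousLinearMap.mul_apply, sub_neg_eq_add,
      ContinuousLinearMap.add_apply, add_comm] using h
  -- quasi-additivity in convenient form
  have hq' : ∀ (y : Y) (z : X), Th (y + δT z) = Th y + Th (δT z) := fun y z =>
    hq y (δT z) (Set.mem_range_self z)
  set Ψ : Y → Y := fun y => y - δT (C (Th y)) with hΨ
  -- key: Th (Ψ y) = C (Th y)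
  have hThΨ : ∀ y, Th (Ψ y) = C (Th y) := by
    intro y
    have h1 : Th (Ψ y) = Th y + Th (δT (-(C (Th y)))) := by
      have : Ψ y = y + δT (-(C (Th y))) := by simp [hΨ, sub_eq_add_neg]
      rw [this, hq']
    rw [h1, ← hA, map_neg]
    have := hC1 (Th y)
    have h2 : Th y + -A (C (Th y)) = (C (Th y) + A (C (Th y))) + -A (C (Th y)) := by
      rw [this]
    rw [h2]; abel
  have key1 : ∀ y, Ψ y + δT (Th (Ψ y)) = y := by
    intro y; rw [hThΨ]; simp [hΨ]
  have key2 : ∀ y, Ψ (y + δT (Th y)) = y := by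
    intro y
    have h1 : Th (y + δT (Th y)) = Th y + A (Th y) := by rw [hq', hA]
    simp only [hΨ, h1, hC2]
    abel
  have key4 : ∀ y, Th (Ψ y) + A (Th (Ψ y)) = Th y := by
    intro y; rw [hThΨ]; exact hC1 (Th y)
  -- kernel fact
  have hkf : ∀ x : X, δT (Th (T x)) = δT x := by
    intro x
    have hT0 : T (Th (T x) - x) = 0 := by
      rw [map_sub, hg1, sub_self]
    have hδ0 : δT (Th (T x) - x) = 0 := hker hT0
    have h := map_sub δT (Th (T x)) x
    rw [hδ0] at h
    exact sub_eq_zero.mp h.symm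
  -- key: Th (Ψ ((T + δT) x)) = Th (T x)
  have key3 : ∀ x : X, Th (Ψ ((T + δT) x)) = Th (T x) := by
    intro x
    have h1 : Th ((T + δT) x) = Th (T x) + A x := by
      have : (T + δT) x = T x + δT x := rfl
      rw [this, hq', hA]
    have h2 : A (Th (T x)) = A x := by
      rw [hA, hkf, hA]
    rw [hThΨ, h1, ← h2, hC2]
  refine ⟨Ψ, key1, key2, ⟨⟨?_, ?_⟩, ?_, ?_⟩, key4⟩
  · intro c y
    show Th (Ψ (c • y)) = c • Th (Ψ y)
    rw [hThΨ, hThΨ, hhom c y, map_smul]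
  · refine ⟨‖C‖ * M, fun y => ?_⟩
    show ‖Th (Ψ y)‖ ≤ ‖C‖ * M * ‖y‖
    rw [hThΨ]
    calc ‖C (Th y)‖ ≤ ‖C‖ * ‖Th y‖ := C.le_opNorm _
      _ ≤ ‖C‖ * (M * ‖y‖) := by
          exact mul_le_mul_of_nonneg_left (hM y) (norm_nonneg C)
      _ = ‖C‖ * M * ‖y‖ := by ring
  · intro x
    show (T + δT) (Th (Ψ ((T + δT) x))) = (T + δT) x
    rw [key3]
    show T (Th (T x)) + δT (Th (T x)) = (T + δT) x
    rw [hg1, hkf]; rfl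
  · intro y
    show Th (Ψ ((T + δT) (Th (Ψ y)))) = Th (Ψ y)
    rw [key3, hg2]
end

section
/- Let X, Y be real Banach spaces, T ∈ B(X,Y) with a bounded homogeneous generalized inverse T^h : Y → X, and let δT ∈ B(X,Y) be such that T^h is quasi-additive on R(δT) and ‖T^h δT‖ < 1 (so that I_X + T^h δT is invertible in B(X,X)). Put T̄ = T + δT. If R(δT) ⊆ R(T), then T̄ has a bounded homogeneous generalized inverse given by T̄^h = T^h ∘ (I_Y + δT T^h)^{-1} = (I_X + T^h δT)^{-1} ∘ T^h. -/
open Metric Set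

variable {X Y : Type*} [NormedAddCommGroup X] [NormedSpace ℝ X]
  [NormedAddCommGroup Y] [NormedSpace ℝ Y]

theorem stmt_10 [CompleteSpace X] [CompleteSpace Y] (T δT : X →L[ℝ] Y)
    (Th : Y → X) (hTh : GenInv T Th)
    (hq : QuasiAdditiveOn Th (Set.range ⇑δT))
    (A : X →L[ℝ] X) (hA : ∀ x, A x = Th (δT x)) (hAn : ‖A‖ < 1)
    (hran : Set.range ⇑δT ⊆ Set.range ⇑T) :
    ∃ Ψ : Y → Y, (∀ y, Ψ y + δT (Th (Ψ y)) = y) ∧ (∀ y, Ψ (y + δT (Th y)) = y) ∧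
      GenInv (T + δT) (fun y => Th (Ψ y)) ∧
      (∀ y, Th (Ψ y) + A (Th (Ψ y)) = Th y) := by

  obtain ⟨⟨hhom, M, hM⟩, hTST, hSTS⟩ := hTh
  have hAn' : ‖(-A : X →L[ℝ] X)‖ < 1 := by simpa using hAn
  set u : (X →L[ℝ] X)ˣ := Units.oneSub (-A) hAn' with hu
  set B : X →L[ℝ] X := ↑u⁻¹ with hBdef
  have huval : (u : X →L[ℝ] X) = 1 + A := by
    simp [hu, Units.oneSub, sub_neg_eq_add]
  have hBA : ∀ x, B x + A (B x) = x := by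
    intro x
    have h := congrArg (fun f : X →L[ℝ] X => f x) u.mul_inv
    simpa [huval, ContinuousLinearMap.mul_apply, ContinuousLinearMap.add_apply,
      ContinuousLinearMap.one_apply] using h
  have hAB : ∀ x, B (x + A x) = x := by
    intro x
    have h := congrArg (fun f : X →L[ℝ] X => f x) u.inv_mul
    simpa [huval, ContinuousLinearMap.mul_apply, ContinuousLinearMap.add_apply,
      ContinuousLinearMap.one_apply] using h
  have hneg : ∀ z : Y, Th (-z) = -Th z := by
    intro z
    have := hhom (-1) z
    simpa using this
  have hTA : ∀ x, T (A x) = δT x := by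
    intro x
    obtain ⟨w, hw⟩ := hran ⟨x, rfl⟩
    rw [hA, ← hw, hTST, hw]
  have hThsub : ∀ (y : Y) (v : X), Th (y - δT v) = Th y - Th (δT v) := by
    intro y v
    have h1 := hq y (δT (-v)) ⟨-v, rfl⟩
    rw [map_neg] at h1
    rw [hneg] at h1
    rw [sub_eq_add_neg, h1, sub_eq_add_neg]
  have key : ∀ y : Y, Th (y - δT (B (Th y))) = B (Th y) := by
    intro y
    rw [hThsub, ← hA, sub_eq_iff_eq_add]
    exact (hBA (Th y)).symm
  have hThTbar : ∀ v : X, Th ((T + δT) v) = Th (T v) + A v := by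
    intro v
    have h1 := hq (T v) (δT v) ⟨v, rfl⟩
    rw [ContinuousLinearMap.add_apply, h1, hA]
  have hTbar : ∀ v : X, (T + δT) v = T (v + A v) := by
    intro v
    rw [ContinuousLinearMap.add_apply, map_add, hTA]
  refine ⟨fun y => y - δT (B (Th y)), ?_, ?_, ⟨⟨?_, ?_⟩, ?_, ?_⟩, ?_⟩
  · intro y
    rw [key y]
    exact sub_add_cancel y (δT (B (Th y)))
  · intro y
    have h1 : Th (y + δT (Th y)) = Th y + A (Th y) := by
      rw [hq y (δT (Th y)) ⟨Th y, rfl⟩, hA]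
    show y + δT (Th y) - δT (B (Th (y + δT (Th y)))) = y
    rw [h1, hAB]
    abel
  · intro c x
    show Th (c • x - δT (B (Th (c • x)))) = c • Th (x - δT (B (Th x)))
    rw [key, key, hhom, map_smul]
  · refine ⟨‖B‖ * max M 0, fun y => ?_⟩
    show ‖Th (y - δT (B (Th y)))‖ ≤ ‖B‖ * max M 0 * ‖y‖
    rw [key]
    calc ‖B (Th y)‖ ≤ ‖B‖ * ‖Th y‖ := B.le_opNorm _
      _ ≤ ‖B‖ * (max M 0 * ‖y‖) := by
          apply mul_le_mul_of_nonneg_left _ (norm_nonneg B)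
          exact (hM y).trans (mul_le_mul_of_nonneg_right (le_max_left M 0) (norm_nonneg y))
      _ = ‖B‖ * max M 0 * ‖y‖ := by ring
  · intro x
    show (T + δT) (Th ((T + δT) x - δT (B (Th ((T + δT) x))))) = (T + δT) x
    rw [key, hThTbar, hTbar (B (Th (T x) + A x)), hBA, map_add, hTST, hTA,
      ContinuousLinearMap.add_apply]
  · intro y
    show Th ((T + δT) (Th (y - δT (B (Th y)))) -
        δT (B (Th ((T + δT) (Th (y - δT (B (Th y)))))))) = Th (y - δT (B (Th y)))
    rw [key y, key ((T + δT) (B (Th y))), hThTbar]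
    have h2 : Th (T (B (Th y))) = B (Th y) := by
      rw [← key y]
      exact hSTS _
    rw [h2, hBA]
  · intro y
    show Th (y - δT (B (Th y))) + A (Th (y - δT (B (Th y)))) = Th y
    rw [key y]
    exact hBA (Th y)
end

section
/- Let X, Y be real Banach spaces and T ∈ B(X,Y) with T ≠ 0 and R(T) closed. Assume N(T) ⊆ X and R(T) ⊆ Y are Chebyshev subspaces, so the Moore–Penrose metric generalized inverse T^M exists. Let δT ∈ B(X,Y) be such that T^M is quasi-additive on R(δT) and ‖T^M δT‖ < 1, and put T̄ = T + δT. Suppose N(T̄) and the closure of R(T̄) are Chebyshev subspaces of X and Y respectively, and R(T̄) ∩ N(T^M) = {0}. Then R(T̄) is closed in Y, T̄ has a Moore–Penrose metric generalized inverse given by T̄^M = (I_X − π_{N(T̄)}) ∘ (I_X + T^M δT)^{-1} ∘ T^M ∘ π_{R(T̄)}, and ‖T̄^M‖ ≤ 2‖T^M‖/(1 − ‖T^M δT‖). -/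
set_option linter.unusedSectionVars false

open Metric Set

variable {X Y : Type*} [NormedAddCommGroup X] [NormedSpace ℝ X]
  [NormedAddCommGroup Y] [NormedSpace ℝ Y]

private lemma le_infDist_aux {s : Set X} {x : X} {c : ℝ} (hs : s.Nonempty)
    (h : ∀ y ∈ s, c ≤ dist x y) : c ≤ infDist x s := by
  by_contra hc
  push_neg at hc
  obtain ⟨y, hy, hlt⟩ := (infDist_lt_iff hs).1 hc
  exact absurd hlt (not_lt.2 (h y hy))

private lemma proj_eq {V : Set X} (hV : IsChebyshev V) {p : X → X} (hp : IsMetricProjOn V p)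
    {x v : X} (hv : v ∈ V) (hd : ‖x - v‖ = infDist x V) : p x = v := by
  obtain ⟨w, _, hu⟩ := hV x
  exact (hu _ ⟨(hp x).1, (hp x).2⟩).trans (hu v ⟨hv, hd⟩).symm

private lemma proj_self {V : Set X} (hV : IsChebyshev V) {p : X → X}
    (hp : IsMetricProjOn V p) {x : X} (hx : x ∈ V) : p x = x :=
  proj_eq hV hp hx (by simp [infDist_zero_of_mem hx])

private lemma infDist_add_of {V : Set X} {v : X}
    (h1 : ∀ w ∈ V, w + v ∈ V) (h2 : ∀ w ∈ V, w - v ∈ V) (x : X) :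
    infDist (x + v) V = infDist x V := by
  rcases V.eq_empty_or_nonempty with h | hne
  · simp [h]
  apply le_antisymm
  · apply le_infDist_aux hne
    intro w hw
    calc infDist (x + v) V ≤ dist (x + v) (w + v) := infDist_le_dist_of_mem (h1 w hw)
      _ = dist x w := by rw [dist_add_right]
  · apply le_infDist_aux hne
    intro w hw
    calc infDist x V ≤ dist x (w - v) := infDist_le_dist_of_mem (h2 w hw)
      _ = dist (x + v) w := by
        rw [dist_eq_norm, dist_eq_norm]; congr 1; abel

private lemma infDist_smul_le {V : Set X} {c : ℝ} (hc : c ≠ 0)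
    (h1 : ∀ w ∈ V, c • w ∈ V) (x : X) :
    infDist (c • x) V ≤ |c| * infDist x V := by
  rcases V.eq_empty_or_nonempty with h | hne
  · simp [h]
  have ha : (0:ℝ) < |c| := abs_pos.2 hc
  rw [← div_le_iff₀' ha]
  apply le_infDist_aux hne
  intro w hw
  rw [div_le_iff₀' ha]
  calc infDist (c • x) V ≤ dist (c • x) (c • w) := infDist_le_dist_of_mem (h1 w hw)
    _ = |c| * dist x w := by rw [dist_smul₀, Real.norm_eq_abs]

private lemma infDist_smul_eq {V : Set X} {c : ℝ} (hc : c ≠ 0)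
    (h1 : ∀ (a : ℝ), ∀ w ∈ V, a • w ∈ V) (x : X) :
    infDist (c • x) V = |c| * infDist x V := by
  apply le_antisymm (infDist_smul_le hc (h1 c) x)
  have h2 := infDist_smul_le (inv_ne_zero hc) (h1 c⁻¹) (c • x)
  rw [inv_smul_smul₀ hc, abs_inv] at h2
  have ha : (0:ℝ) < |c| := abs_pos.2 hc
  calc |c| * infDist x V ≤ |c| * (|c|⁻¹ * infDist (c • x) V) :=
        mul_le_mul_of_nonneg_left h2 (le_of_lt ha)
    _ = infDist (c • x) V := by field_simp

private lemma proj_smul_s11 {V : Set X} (hV : IsChebyshev V) {p : X → X}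
    (hp : IsMetricProjOn V p) (h0 : (0:X) ∈ V)
    (hsm : ∀ (a : ℝ), ∀ w ∈ V, a • w ∈ V) (c : ℝ) (x : X) :
    p (c • x) = c • p x := by
  rcases eq_or_ne c 0 with rfl | hc
  · simp only [zero_smul]
    exact proj_eq hV hp h0 (by simp [infDist_zero_of_mem h0])
  · refine proj_eq hV hp (hsm c _ (hp x).1) ?_
    rw [← smul_sub, norm_smul, Real.norm_eq_abs, (hp x).2, infDist_smul_eq hc hsm]

private lemma proj_add {V : Set X} (hV : IsChebyshev V) {p : X → X}
    (hp : IsMetricProjOn V p) {v : X} (hv : v ∈ V)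
    (hadd : ∀ a ∈ V, ∀ b ∈ V, a + b ∈ V) (hneg : ∀ a ∈ V, -a ∈ V) (x : X) :
    p (x + v) = p x + v := by
  refine proj_eq hV hp (hadd _ (hp x).1 _ hv) ?_
  have he : infDist (x + v) V = infDist x V := by
    refine infDist_add_of (fun w hw => hadd _ hw _ hv) (fun w hw => ?_) x
    rw [sub_eq_add_neg]; exact hadd _ hw _ (hneg _ hv)
  rw [he, ← (hp x).2]
  congr 1; abel

theorem stmt_11 [CompleteSpace X] [CompleteSpace Y] (T δT : X →L[ℝ] Y) (hT : T ≠ 0)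
    (hcl : IsClosed (Set.range ⇑T))
    (hN : IsChebyshev {x : X | T x = 0}) (hR : IsChebyshev (Set.range ⇑T))
    (πN : X → X) (hπN : IsMetricProjOn {x : X | T x = 0} πN)
    (πR : Y → Y) (hπR : IsMetricProjOn (Set.range ⇑T) πR)
    (TM : Y → X) (hTM : BddHomOp TM)
    (hTM1 : ∀ x, T (TM (T x)) = T x) (hTM2 : ∀ y, TM (T (TM y)) = TM y)
    (hTM3 : ∀ y, T (TM y) = πR y) (hTM4 : ∀ x, TM (T x) = x - πN x)
    (hq : QuasiAdditiveOn TM (Set.range ⇑δT))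
    (A : X →L[ℝ] X) (hA : ∀ x, A x = TM (δT x)) (hAn : ‖A‖ < 1)
    (hNb : IsChebyshev {x : X | (T + δT) x = 0})
    (hRb : IsChebyshev (closure (Set.range ⇑(T + δT))))
    (πNb : X → X) (hπNb : IsMetricProjOn {x : X | (T + δT) x = 0} πNb)
    (πRb : Y → Y) (hπRb : IsMetricProjOn (closure (Set.range ⇑(T + δT))) πRb)
    (hstab : Set.range ⇑(T + δT) ∩ {y : Y | TM y = 0} = {0}) :
    IsClosed (Set.range ⇑(T + δT)) ∧
    ∃ TbM : Y → X,
      (∀ y, TbM y = Ring.inverse (1 + A) (TM (πRb y)) -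
        πNb (Ring.inverse (1 + A) (TM (πRb y)))) ∧
      BddHomOp TbM ∧
      (∀ x, (T + δT) (TbM ((T + δT) x)) = (T + δT) x) ∧
      (∀ y, TbM ((T + δT) (TbM y)) = TbM y) ∧
      (∀ y, (T + δT) (TbM y) = πRb y) ∧
      (∀ x, TbM ((T + δT) x) = x - πNb x) ∧
      hnorm TbM ≤ 2 * hnorm TM / (1 - ‖A‖) := by
  classical
  set Tb := T + δT with hTbdef
  obtain ⟨hTMh, M0, hM0⟩ := hTM
  set M := max M0 1 with hMdef
  have hM1 : (1:ℝ) ≤ M := le_max_right _ _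
  have hMpos : (0:ℝ) < M := lt_of_lt_of_le one_pos hM1
  have hMb : ∀ y, ‖TM y‖ ≤ M * ‖y‖ := fun y =>
    (hM0 y).trans (mul_le_mul_of_nonneg_right (le_max_left _ _) (norm_nonneg y))
  -- the unit 1 + A and its inverse
  have hAneg : ‖-A‖ < 1 := by rwa [norm_neg]
  have hu : IsUnit (1 + A) := by
    have h := isUnit_one_sub_of_norm_lt_one hAneg
    rwa [sub_neg_eq_add] at h
  set Binv : X →L[ℝ] X := Ring.inverse (1 + A) with hBinvdef
  have hBi1 : ∀ x, Binv ((1 + A) x) = x := by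
    intro x
    have h := Ring.inverse_mul_cancel (1 + A) hu
    have h2 := congrArg (fun f : X →L[ℝ] X => f x) h
    simpa [ContinuousLinearMap.mul_apply] using h2
  have hBi2 : ∀ x, (1 + A) (Binv x) = x := by
    intro x
    have h := Ring.mul_inverse_cancel (1 + A) hu
    have h2 := congrArg (fun f : X →L[ℝ] X => f x) h
    simpa [ContinuousLinearMap.mul_apply] using h2
  have hApos : (0:ℝ) < 1 - ‖A‖ := by linarith
  have hBn : ‖Binv‖ * (1 - ‖A‖) ≤ 1 := by
    have h : Binv = 1 - Binv * A := by
      have h1 := Ring.inverse_mul_cancel (1 + A) hu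
      rw [mul_add, mul_one] at h1
      rw [eq_sub_iff_add_eq]
      exact h1
    have hone : ‖(1 : X →L[ℝ] X)‖ ≤ 1 := by
      rw [ContinuousLinearMap.one_def]; exact ContinuousLinearMap.norm_id_le
    have hBnorm : ‖Binv‖ ≤ 1 + ‖Binv‖ * ‖A‖ := by
      calc ‖Binv‖ = ‖(1 : X →L[ℝ] X) - Binv * A‖ := by rw [← h]
        _ ≤ ‖(1 : X →L[ℝ] X)‖ + ‖Binv * A‖ := norm_sub_le _ _
        _ ≤ 1 + ‖Binv‖ * ‖A‖ := add_le_add hone (norm_mul_le _ _)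
    nlinarith [norm_nonneg Binv, norm_nonneg A]
  -- key identity
  have key0 : ∀ x, TM (Tb x) = (1 + A) x - πN x := by
    intro x
    have h1 : Tb x = T x + δT x := rfl
    rw [h1, hq (T x) (δT x) ⟨x, rfl⟩, hTM4, ← hA]
    simp only [ContinuousLinearMap.add_apply, ContinuousLinearMap.one_apply]
    abel
  have pNTM : ∀ y, πN (TM y) = 0 := by
    intro y
    have h := hTM4 (TM y)
    rw [hTM2 y] at h
    exact sub_eq_self.1 h.symm
  -- kernel of T facts
  have hKN0 : (0:X) ∈ {x : X | T x = 0} := by simp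
  have hKNadd : ∀ a ∈ {x : X | T x = 0}, ∀ b ∈ {x : X | T x = 0},
      a + b ∈ {x : X | T x = 0} := by
    intro a ha b hb; simp only [Set.mem_setOf_eq, map_add] at *; rw [ha, hb, add_zero]
  have hKNneg : ∀ a ∈ {x : X | T x = 0}, -a ∈ {x : X | T x = 0} := by
    intro a ha; simp only [Set.mem_setOf_eq, map_neg] at *; rw [ha, neg_zero]
  have hKNsmul : ∀ (c : ℝ), ∀ a ∈ {x : X | T x = 0}, c • a ∈ {x : X | T x = 0} := by
    intro c a ha; simp only [Set.mem_setOf_eq, map_smul] at *; rw [ha, smul_zero]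
  have hπN_add : ∀ x v, T v = 0 → πN (x + v) = πN x + v := fun x v hv =>
    proj_add hN hπN hv hKNadd hKNneg x
  have hπN_neg : ∀ w, πN (-w) = -(πN w) := by
    intro w
    have h := proj_smul_s11 hN hπN hKN0 hKNsmul (-1) w
    simpa [neg_one_smul] using h
  have pNinv : ∀ n : X, T n = 0 → πN (Binv n) = n := by
    intro n hn
    have h3 : Binv n + A (Binv n) = n := by
      have h := hBi2 n
      simpa [ContinuousLinearMap.add_apply, ContinuousLinearMap.one_apply] using h
    have h2 : Binv n = -(A (Binv n)) + n := by
      rw [neg_add_eq_sub]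
      exact eq_sub_of_add_eq h3
    rw [h2, hπN_add _ _ hn, hπN_neg, hA, pNTM, neg_zero, zero_add]
  have hker_inv : ∀ n : X, T n = 0 → Tb (Binv n) = 0 := by
    intro n hn
    have h1 : TM (Tb (Binv n)) = 0 := by
      rw [key0, hBi2, pNinv n hn, sub_self]
    have h2 : Tb (Binv n) ∈ Set.range ⇑Tb ∩ {y : Y | TM y = 0} := ⟨⟨_, rfl⟩, h1⟩
    rw [hstab] at h2
    simpa using h2
  have hstar : ∀ x, Tb (Binv (TM (Tb x))) = Tb x := by
    intro x
    have hz : Binv (TM (Tb x)) = x - Binv (πN x) := by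
      rw [key0, map_sub, hBi1]
    rw [hz, map_sub, hker_inv _ (hπN x).1, sub_zero]
  -- closedness of the range
  set C := ‖Binv‖ * M + 1 with hCdef
  have hC : (0:ℝ) < C := by positivity
  set F : NormedAddGroupHom X Y :=
    { toFun := ⇑Tb, map_add' := fun a b => map_add Tb a b,
      bound' := ⟨‖Tb‖, fun v => Tb.le_opNorm v⟩ } with hFdef
  have hFapp : ∀ x, F x = Tb x := fun x => rfl
  have hsurj : F.SurjectiveOnWith F.range C := by
    intro y hy
    rw [NormedAddGroupHom.mem_range] at hy
    obtain ⟨x, rfl⟩ := hy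
    refine ⟨Binv (TM (Tb x)), hstar x, ?_⟩
    show ‖Binv (TM (Tb x))‖ ≤ C * ‖Tb x‖
    calc ‖Binv (TM (Tb x))‖ ≤ ‖Binv‖ * ‖TM (Tb x)‖ := Binv.le_opNorm _
      _ ≤ ‖Binv‖ * (M * ‖Tb x‖) :=
        mul_le_mul_of_nonneg_left (hMb _) (norm_nonneg _)
      _ = ‖Binv‖ * M * ‖Tb x‖ := by ring
      _ ≤ C * ‖Tb x‖ :=
        mul_le_mul_of_nonneg_right (by rw [hCdef]; linarith) (norm_nonneg _)
  have hsurj2 := controlled_closure_of_complete hC one_pos hsurj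
  have hcoeq : (F.range : Set Y) = Set.range ⇑Tb := by
    ext z
    constructor
    · rintro ⟨w, rfl⟩; exact ⟨w, rfl⟩
    · rintro ⟨w, rfl⟩; exact ⟨w, rfl⟩
  have hclosed : IsClosed (Set.range ⇑Tb) := by
    apply isClosed_of_closure_subset
    intro y hy
    have hy' : y ∈ F.range.topologicalClosure := by
      have h2 : y ∈ closure (F.range : Set Y) := by rw [hcoeq]; exact hy
      exact h2
    obtain ⟨g, hg, -⟩ := hsurj2 y hy'
    exact ⟨g, hg⟩
  have hcleq : closure (Set.range ⇑Tb) = Set.range ⇑Tb := hclosed.closure_eq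
  rw [hcleq] at hRb hπRb
  -- range of Tb facts
  have hR0 : (0:Y) ∈ Set.range ⇑Tb := ⟨0, map_zero Tb⟩
  have hRsmul : ∀ (c : ℝ), ∀ a ∈ Set.range ⇑Tb, c • a ∈ Set.range ⇑Tb := by
    rintro c a ⟨w, rfl⟩; exact ⟨c • w, map_smul Tb c w⟩
  have hπRb_self : ∀ x, πRb (Tb x) = Tb x := fun x => proj_self hRb hπRb ⟨x, rfl⟩
  have hπRb_smul : ∀ (c : ℝ) y, πRb (c • y) = c • πRb y :=
    fun c y => proj_smul_s11 hRb hπRb hR0 hRsmul c y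
  have hπRb_norm : ∀ y, ‖πRb y‖ ≤ 2 * ‖y‖ := by
    intro y
    have h1 : ‖y - πRb y‖ ≤ ‖y‖ := by
      rw [(hπRb y).2]
      calc infDist y (Set.range ⇑Tb) ≤ dist y 0 := infDist_le_dist_of_mem hR0
        _ = ‖y‖ := dist_zero_right y
    calc ‖πRb y‖ = ‖y - (y - πRb y)‖ := by congr 1; abel
      _ ≤ ‖y‖ + ‖y - πRb y‖ := norm_sub_le _ _
      _ ≤ 2 * ‖y‖ := by linarith
  -- kernel of Tb facts
  have hNb0 : (0:X) ∈ {x : X | Tb x = 0} := by simp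
  have hNbadd : ∀ a ∈ {x : X | Tb x = 0}, ∀ b ∈ {x : X | Tb x = 0},
      a + b ∈ {x : X | Tb x = 0} := by
    intro a ha b hb; simp only [Set.mem_setOf_eq, map_add] at *; rw [ha, hb, add_zero]
  have hNbneg : ∀ a ∈ {x : X | Tb x = 0}, -a ∈ {x : X | Tb x = 0} := by
    intro a ha; simp only [Set.mem_setOf_eq, map_neg] at *; rw [ha, neg_zero]
  have hNbsmul : ∀ (c : ℝ), ∀ a ∈ {x : X | Tb x = 0}, c • a ∈ {x : X | Tb x = 0} := by
    intro c a ha; simp only [Set.mem_setOf_eq, map_smul] at *; rw [ha, smul_zero]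
  have hπNb_add : ∀ x v, Tb v = 0 → πNb (x + v) = πNb x + v := fun x v hv =>
    proj_add hNb hπNb hv hNbadd hNbneg x
  have hπNb_smul : ∀ (c : ℝ) x, πNb (c • x) = c • πNb x :=
    fun c x => proj_smul_s11 hNb hπNb hNb0 hNbsmul c x
  have hπNb_norm : ∀ w, ‖w - πNb w‖ ≤ ‖w‖ := by
    intro w
    rw [(hπNb w).2]
    calc infDist w {x : X | Tb x = 0} ≤ dist w 0 := infDist_le_dist_of_mem hNb0
      _ = ‖w‖ := dist_zero_right w
  have hπNb_ker : ∀ x, Tb (πNb x) = 0 := fun x => (hπNb x).1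
  -- Moore–Penrose properties
  have MP4 : ∀ x, Binv (TM (πRb (Tb x))) - πNb (Binv (TM (πRb (Tb x)))) = x - πNb x := by
    intro x
    have hw : Binv (TM (πRb (Tb x))) = x - Binv (πN x) := by
      rw [hπRb_self, key0, map_sub, hBi1]
    have hmem : Tb (-(Binv (πN x))) = 0 := by
      rw [map_neg, hker_inv _ (hπN x).1, neg_zero]
    rw [hw]
    have h2 : πNb (x - Binv (πN x)) = πNb x - Binv (πN x) := by
      rw [sub_eq_add_neg, hπNb_add x _ hmem, ← sub_eq_add_neg]
    rw [h2]
    abel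
  have MP3 : ∀ y, Tb (Binv (TM (πRb y)) - πNb (Binv (TM (πRb y)))) = πRb y := by
    intro y
    obtain ⟨x0, hx0⟩ := (hπRb y).1
    have h1 : Tb (Binv (TM (πRb y))) = πRb y := by
      rw [← hx0]; exact hstar x0
    rw [map_sub, h1, hπNb_ker, sub_zero]
  have MP0 : ∀ y, πNb (Binv (TM (πRb y)) - πNb (Binv (TM (πRb y)))) = 0 := by
    intro y
    have hmem : Tb (-(πNb (Binv (TM (πRb y))))) = 0 := by
      rw [map_neg, hπNb_ker, neg_zero]
    rw [sub_eq_add_neg, hπNb_add _ _ hmem, ← sub_eq_add_neg, sub_self]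
  refine ⟨hclosed, fun y => Binv (TM (πRb y)) - πNb (Binv (TM (πRb y))),
    fun y => rfl, ⟨?_, ?_⟩, ?_, ?_, ?_, ?_, ?_⟩
  · -- homogeneity
    intro c y
    simp only
    rw [hπRb_smul, hTMh, map_smul, hπNb_smul, smul_sub]
  · -- boundedness
    refine ⟨‖Binv‖ * M * 2, fun y => ?_⟩
    simp only
    calc ‖Binv (TM (πRb y)) - πNb (Binv (TM (πRb y)))‖
        ≤ ‖Binv (TM (πRb y))‖ := hπNb_norm _
      _ ≤ ‖Binv‖ * ‖TM (πRb y)‖ := Binv.le_opNorm _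
      _ ≤ ‖Binv‖ * (M * ‖πRb y‖) := mul_le_mul_of_nonneg_left (hMb _) (norm_nonneg _)
      _ ≤ ‖Binv‖ * (M * (2 * ‖y‖)) := mul_le_mul_of_nonneg_left
          (mul_le_mul_of_nonneg_left (hπRb_norm y) hMpos.le) (norm_nonneg _)
      _ = ‖Binv‖ * M * 2 * ‖y‖ := by ring
  · -- MP1
    intro x
    simp only
    rw [MP4 x, map_sub, hπNb_ker, sub_zero]
  · -- MP2
    intro y
    simp only
    rw [MP4, MP0, sub_zero]
  · -- MP3
    intro y
    simp only
    exact MP3 y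
  · -- MP4
    intro x
    simp only
    exact MP4 x
  · -- norm estimate
    have hx0 : ∃ x : X, T x ≠ 0 := by
      by_contra h
      push_neg at h
      exact hT (by ext x; simpa using h x)
    obtain ⟨x0, hx0⟩ := hx0
    have hy0 : ‖T x0‖ ≠ 0 := norm_ne_zero_iff.2 hx0
    have hu0 : ‖(‖T x0‖⁻¹ • T x0 : Y)‖ = 1 := by
      rw [norm_smul, norm_inv, norm_norm, inv_mul_cancel₀ hy0]
    have hbddTM : BddAbove ((fun y => ‖TM y‖) '' {y : Y | ‖y‖ = 1}) := by
      refine ⟨M, ?_⟩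
      rintro z ⟨u, hu1, rfl⟩
      have := hMb u
      rw [Set.mem_setOf_eq] at hu1
      rw [hu1, mul_one] at this
      exact this
    have hTMle : ∀ y, ‖TM y‖ ≤ hnorm TM * ‖y‖ := by
      intro y
      rcases eq_or_ne y 0 with rfl | hy
      · have h0 : TM (0:Y) = 0 := by
          have := hTMh 0 0
          simpa using this
        simp [h0]
      · have hny : ‖y‖ ≠ 0 := norm_ne_zero_iff.2 hy
        have humem : ‖(‖y‖⁻¹ • y : Y)‖ = 1 := by
          rw [norm_smul, norm_inv, norm_norm, inv_mul_cancel₀ hny]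
        have hle : ‖TM (‖y‖⁻¹ • y)‖ ≤ hnorm TM :=
          le_csSup hbddTM ⟨_, humem, rfl⟩
        have hrw : TM y = ‖y‖ • TM (‖y‖⁻¹ • y) := by
          rw [← hTMh, smul_inv_smul₀ hny]
        rw [hrw, norm_smul, norm_norm, mul_comm]
        exact mul_le_mul_of_nonneg_right hle (norm_nonneg y)
    have hTMnn : (0:ℝ) ≤ hnorm TM :=
      le_trans (norm_nonneg _) (le_csSup hbddTM ⟨_, hu0, rfl⟩)
    have hB2 : ‖Binv‖ ≤ (1 - ‖A‖)⁻¹ := by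
      rw [← one_div]
      exact (le_div_iff₀ hApos).2 hBn
    unfold hnorm
    refine Real.sSup_le ?_ (by positivity)
    rintro z ⟨u, hu1, rfl⟩
    rw [Set.mem_setOf_eq] at hu1
    simp only
    calc ‖Binv (TM (πRb u)) - πNb (Binv (TM (πRb u)))‖
        ≤ ‖Binv (TM (πRb u))‖ := hπNb_norm _
      _ ≤ ‖Binv‖ * ‖TM (πRb u)‖ := Binv.le_opNorm _
      _ ≤ ‖Binv‖ * (hnorm TM * ‖πRb u‖) :=
          mul_le_mul_of_nonneg_left (hTMle _) (norm_nonneg _)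
      _ ≤ ‖Binv‖ * (hnorm TM * 2) := by
          have h3 := hπRb_norm u
          rw [hu1, mul_one] at h3
          exact mul_le_mul_of_nonneg_left (mul_le_mul_of_nonneg_left h3 hTMnn) (norm_nonneg _)
      _ ≤ (1 - ‖A‖)⁻¹ * (hnorm TM * 2) :=
          mul_le_mul_of_nonneg_right hB2 (by positivity)
      _ = 2 * hnorm TM / (1 - ‖A‖) := by
          field_simp
end

section
/- Let X, Y be real Banach spaces and T ∈ B(X,Y) with T ≠ 0. Then T has a bounded quasi-linear generalized inverse T^h : Y → X (a bounded homogeneous generalized inverse that is quasi-additive on R(T)) if and only if there exist a bounded linear projector P ∈ B(X,X) with R(P) = N(T) and a bounded quasi-linear projector Q : Y → Y with R(Q) = R(T). -/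
open Metric Set

variable {X Y : Type*} [NormedAddCommGroup X] [NormedSpace ℝ X]
  [NormedAddCommGroup Y] [NormedSpace ℝ Y]

theorem stmt_12 [CompleteSpace X] [CompleteSpace Y] (T : X →L[ℝ] Y) (hT : T ≠ 0) :
    (∃ Th : Y → X, GenInv T Th ∧ QuasiAdditiveOn Th (Set.range ⇑T)) ↔
      ((∃ P : X →L[ℝ] X, (∀ x, P (P x) = P x) ∧ Set.range ⇑P = {x : X | T x = 0}) ∧
       (∃ Q : Y → Y, BddHomOp Q ∧ (∀ y, Q (Q y) = Q y) ∧
         QuasiAdditiveOn Q (Set.range Q) ∧ Set.range Q = Set.range ⇑T)) := by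
  constructor
  · rintro ⟨Th, ⟨⟨hhom, M, hM⟩, h1, h2⟩, hqa⟩
    have hTh0 : Th 0 = 0 := by simpa using hhom 0 0
    constructor
    · -- P := id - Th ∘ T
      have hadd : ∀ a b : X, Th (T (a + b)) = Th (T a) + Th (T b) := by
        intro a b
        rw [map_add]
        exact hqa (T a) (T b) ⟨b, rfl⟩
      let L : X →ₗ[ℝ] X :=
        { toFun := fun x => x - Th (T x)
          map_add' := by
            intro a b
            show a + b - Th (T (a + b)) = (a - Th (T a)) + (b - Th (T b))
            rw [hadd]; abel
          map_smul' := by intro c x; simp [hhom c (T x), smul_sub] }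
      have hL : ∀ x, ‖L x‖ ≤ (1 + |M| * ‖T‖) * ‖x‖ := by
        intro x
        have habs : ‖Th (T x)‖ ≤ |M| * ‖T x‖ := by
          refine (hM (T x)).trans ?_
          exact mul_le_mul_of_nonneg_right (le_abs_self M) (norm_nonneg _)
        calc ‖x - Th (T x)‖ ≤ ‖x‖ + ‖Th (T x)‖ := norm_sub_le _ _
          _ ≤ ‖x‖ + |M| * ‖T x‖ := by linarith
          _ ≤ ‖x‖ + |M| * (‖T‖ * ‖x‖) := by
              nlinarith [T.le_opNorm x, abs_nonneg M]
          _ = (1 + |M| * ‖T‖) * ‖x‖ := by ring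
      refine ⟨L.mkContinuous _ hL, ?_, ?_⟩
      · intro x
        have : T (x - Th (T x)) = 0 := by
          simp [map_sub, h1 x]
        show L (L x) = L x
        simp only [L, LinearMap.coe_mk, AddHom.coe_mk, this, hTh0]
        abel
      · ext x
        simp only [Set.mem_range, Set.mem_setOf_eq]
        constructor
        · rintro ⟨w, rfl⟩
          show T (L w) = 0
          simp [L, map_sub, h1 w]
        · intro hx
          exact ⟨x, by simp [L, LinearMap.mkContinuous, hx, hTh0]⟩
    · -- Q := T ∘ Th
      refine ⟨fun y => T (Th y), ⟨fun c y => by show T (Th (c • y)) = _; rw [hhom c y, map_smul], ⟨‖T‖ * |M|, fun y => ?_⟩⟩, fun y => congrArg T (h2 y), ?_, ?_⟩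
      · show ‖T (Th y)‖ ≤ ‖T‖ * |M| * ‖y‖
        have habs : ‖Th y‖ ≤ |M| * ‖y‖ :=
          (hM y).trans (mul_le_mul_of_nonneg_right (le_abs_self M) (norm_nonneg _))
        calc ‖T (Th y)‖ ≤ ‖T‖ * ‖Th y‖ := T.le_opNorm _
          _ ≤ ‖T‖ * (|M| * ‖y‖) := by nlinarith [norm_nonneg T, norm_nonneg (Th y)]
          _ = ‖T‖ * |M| * ‖y‖ := by ring
      · rintro y z ⟨w, rfl⟩
        show T (Th (y + T (Th w))) = T (Th y) + T (Th (T (Th w)))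
        rw [hqa y (T (Th w)) ⟨Th w, rfl⟩, map_add]
      · ext y
        constructor
        · rintro ⟨w, rfl⟩; exact ⟨Th w, rfl⟩
        · rintro ⟨x, rfl⟩; exact ⟨T x, h1 x⟩
  · rintro ⟨⟨P, hPP, hPrange⟩, ⟨Q, ⟨hQhom, MQ, hMQ⟩, hQQ, hQqa, hQrange⟩⟩
    have hfix : ∀ y ∈ Set.range ⇑T, Q y = y := by
      intro y hy
      rw [← hQrange] at hy
      obtain ⟨z, rfl⟩ := hy
      exact hQQ z
    -- range T is closed
    have hclosed : IsClosed (Set.range ⇑T) := by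
      rw [← isSeqClosed_iff_isClosed]
      intro u y hu huy
      have key : ∀ n, ‖Q y - y‖ ≤ (MQ + 1) * ‖y - u n‖ := by
        intro n
        have h1 : Q y = Q (y - u n) + u n := by
          have := hQqa (y - u n) (u n) (by rw [hQrange]; exact hu n)
          rw [sub_add_cancel] at this
          rw [this, hfix (u n) (hu n)]
        have h2 : ‖Q (y - u n)‖ ≤ MQ * ‖y - u n‖ := hMQ _
        calc ‖Q y - y‖ = ‖Q (y - u n) + (u n - y)‖ := by rw [h1, add_sub_assoc]
          _ ≤ ‖Q (y - u n)‖ + ‖u n - y‖ := norm_add_le _ _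
          _ ≤ MQ * ‖y - u n‖ + ‖y - u n‖ := by rw [norm_sub_rev (u n) y]; linarith
          _ = (MQ + 1) * ‖y - u n‖ := by ring
      have hQy : Q y = y := by
        have hlim : Filter.Tendsto (fun n => (MQ + 1) * ‖y - u n‖) Filter.atTop (nhds 0) := by
          have : Filter.Tendsto (fun n => ‖y - u n‖) Filter.atTop (nhds 0) := by
            have := huy.sub_const y
            rw [sub_self] at this
            simpa [norm_sub_rev] using this.norm
          simpa using this.const_mul (MQ + 1)
        have := ge_of_tendsto hlim (Filter.Eventually.of_forall key)
        have h0 : ‖Q y - y‖ ≤ 0 := this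
        rw [sub_eq_zero.mp (norm_le_zero_iff.mp h0)]
      rw [← hQy, ← hQrange]
      exact ⟨y, rfl⟩
    -- setup submodules
    have hPker : ∀ x : X, T x = 0 → P x = x := by
      intro x hx
      have : x ∈ Set.range ⇑P := by rw [hPrange]; exact hx
      obtain ⟨w, rfl⟩ := this
      exact hPP w
    have hTP : ∀ x : X, T (P x) = 0 := by
      intro x
      have : P x ∈ Set.range ⇑P := ⟨x, rfl⟩
      rw [hPrange] at this
      exact this
    let K : Submodule ℝ X := LinearMap.ker (P : X →ₗ[ℝ] X)
    let R : Submodule ℝ Y := LinearMap.range (T : X →ₗ[ℝ] Y)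
    have hRclosed : IsClosed (R : Set Y) := by
      have : (R : Set Y) = Set.range ⇑T := by
        ext y; simp [R, LinearMap.mem_range]
      rw [this]; exact hclosed
    haveI : CompleteSpace R := hRclosed.completeSpace_coe
    haveI : CompleteSpace K := (ContinuousLinearMap.isClosed_ker P).completeSpace_coe
    let f : K →L[ℝ] R := (T.comp K.subtypeL).codRestrict R (fun x => ⟨x, rfl⟩)
    have hfinj : LinearMap.ker (f : K →ₗ[ℝ] R) = ⊥ := by
      rw [LinearMap.ker_eq_bot']
      intro ⟨m, hm⟩ hfm
      have hTm : T m = 0 := by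
        have := congrArg Subtype.val hfm
        exact this
      have hm0 : m = 0 := by
        rw [← hPker m hTm]
        exact LinearMap.mem_ker.mp hm
      exact Subtype.ext hm0
    have hfsurj : LinearMap.range (f : K →ₗ[ℝ] R) = ⊤ := by
      rw [LinearMap.range_eq_top]
      rintro ⟨y, hy⟩
      obtain ⟨x, rfl⟩ := LinearMap.mem_range.mp hy
      refine ⟨⟨x - P x, ?_⟩, ?_⟩
      · simp only [K, LinearMap.mem_ker, ContinuousLinearMap.coe_coe, map_sub, hPP x, sub_self]
      · apply Subtype.ext
        exact (show T (x - P x) = T x by simp [map_sub, hTP x])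
    let e := ContinuousLinearEquiv.ofBijective f hfinj hfsurj
    have hQmem : ∀ y, Q y ∈ R := by
      intro y
      have : Q y ∈ Set.range ⇑T := by rw [← hQrange]; exact ⟨y, hQQ y ▸ rfl⟩
      obtain ⟨x, hx⟩ := this
      exact ⟨x, hx⟩
    let Th : Y → X := fun y => ((e.symm ⟨Q y, hQmem y⟩ : K) : X)
    have hTTh : ∀ y, T (Th y) = Q y := by
      intro y
      have h := congrArg Subtype.val (e.apply_symm_apply ⟨Q y, hQmem y⟩)
      exact h
    have hThT : ∀ x, Th (T x) = x - P x := by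
      intro x
      have hQT : Q (T x) = T x := hfix (T x) ⟨x, rfl⟩
      have hmem : x - P x ∈ K := by
        simp only [K, LinearMap.mem_ker, ContinuousLinearMap.coe_coe, map_sub, hPP x, sub_self]
      have hfval : f ⟨x - P x, hmem⟩ = ⟨Q (T x), hQmem (T x)⟩ := by
        apply Subtype.ext
        exact (show T (x - P x) = Q (T x) by simp [map_sub, hTP x, hQT])
      have h : e.symm ⟨Q (T x), hQmem (T x)⟩ = ⟨x - P x, hmem⟩ := by
        rw [← hfval]
        exact e.symm_apply_apply _
      show ((e.symm ⟨Q (T x), hQmem (T x)⟩ : K) : X) = x - P x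
      rw [h]
    refine ⟨Th, ⟨⟨?_, ?_⟩, ?_, ?_⟩, ?_⟩
    · -- homogeneous
      intro c y
      have h : (⟨Q (c • y), hQmem _⟩ : R) = c • ⟨Q y, hQmem y⟩ := Subtype.ext (hQhom c y)
      show ((e.symm ⟨Q (c • y), hQmem _⟩ : K) : X) = c • ((e.symm ⟨Q y, hQmem y⟩ : K) : X)
      rw [h, map_smul]
      rfl
    · -- bounded
      refine ⟨‖(e.symm : R →L[ℝ] K)‖ * MQ, fun y => ?_⟩
      have h1 : ‖Th y‖ = ‖e.symm ⟨Q y, hQmem y⟩‖ := rfl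
      have h2 : ‖e.symm ⟨Q y, hQmem y⟩‖ ≤ ‖(e.symm : R →L[ℝ] K)‖ * ‖(⟨Q y, hQmem y⟩ : R)‖ :=
        (e.symm : R →L[ℝ] K).le_opNorm _
      have h3 : ‖(⟨Q y, hQmem y⟩ : R)‖ = ‖Q y‖ := rfl
      have h4 : ‖Q y‖ ≤ MQ * ‖y‖ := hMQ y
      have h5 : (0:ℝ) ≤ ‖(e.symm : R →L[ℝ] K)‖ := norm_nonneg _
      rw [h1]
      nlinarith [h2, h3]
    · -- T Th T = T
      intro x
      rw [hThT x, map_sub, hTP x, sub_zero]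
    · -- Th T Th = Th
      intro y
      have : T (Th y) = Q y := hTTh y
      rw [this]
      have h : (⟨Q (Q y), hQmem _⟩ : R) = ⟨Q y, hQmem y⟩ := Subtype.ext (hQQ y)
      show ((e.symm ⟨Q (Q y), hQmem _⟩ : K) : X) = ((e.symm ⟨Q y, hQmem y⟩ : K) : X)
      rw [h]
    · -- quasi-additive on range T
      intro y z hz
      have hQadd : Q (y + z) = Q y + Q z := hQqa y z (by rw [hQrange]; exact hz)
      have h : (⟨Q (y + z), hQmem _⟩ : R) = ⟨Q y, hQmem y⟩ + ⟨Q z, hQmem z⟩ := Subtype.ext hQadd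
      show ((e.symm ⟨Q (y + z), hQmem _⟩ : K) : X) = ((e.symm ⟨Q y, hQmem y⟩ : K) : X) + ((e.symm ⟨Q z, hQmem z⟩ : K) : X)
      rw [h, map_add]
      rfl
end

section
/- Let X, Y be real Banach spaces, T ∈ B(X,Y) with a quasi-linear projector generalized inverse T^H : Y → X, and let δT ∈ B(X,Y) be such that T^H is quasi-additive on R(δT). Put T̄ = T + δT. Assume X = N(T̄) + R(T^H) with N(T̄) ∩ R(T^H) = {0}, and Y = R(T̄) + N(T^H) with R(T̄) ∩ N(T^H) = {0}. Then I_X + T^H∘δT is a bijective bounded linear operator on X. -/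
open Metric Set

variable {X Y : Type*} [NormedAddCommGroup X] [NormedSpace ℝ X]
  [NormedAddCommGroup Y] [NormedSpace ℝ Y]

theorem stmt_13 [CompleteSpace X] [CompleteSpace Y] (T δT : X →L[ℝ] Y)
    (TH : Y → X) (hTH : QLPGenInv T TH)
    (hq : QuasiAdditiveOn TH (Set.range ⇑δT))
    (hX1 : ∀ x : X, ∃ u ∈ {z : X | (T + δT) z = 0}, ∃ v ∈ Set.range TH, x = u + v)
    (hX2 : {z : X | (T + δT) z = 0} ∩ Set.range TH = {0})
    (hY1 : ∀ y : Y, ∃ u ∈ Set.range ⇑(T + δT), ∃ v ∈ {w : Y | TH w = 0}, y = u + v)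
    (hY2 : Set.range ⇑(T + δT) ∩ {w : Y | TH w = 0} = {0}) :
    ∃ A : X →L[ℝ] X, (∀ x, A x = x + TH (δT x)) ∧ Function.Bijective ⇑A := by
  obtain ⟨⟨hhom, M, hM⟩, hTT, hTHT, ⟨P, hPP, hPrange, hPTx⟩,
    ⟨Q, hQbdd, hQQ, hQqa, hQrange, hQeq⟩⟩ := hTH
  -- basic facts
  have hPTHy : ∀ y, P (TH y) = 0 := by
    intro y
    have h := hPTx (TH y)
    rw [hTHT y] at h
    exact sub_eq_self.mp h.symm
  have hTP0 : ∀ x, T (P x) = 0 := by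
    intro x
    have : P x ∈ Set.range ⇑P := ⟨x, rfl⟩
    rw [hPrange] at this
    exact this
  have hkerP : ∀ x : X, T x = 0 → P x = x := by
    intro x hx
    have : x ∈ Set.range ⇑P := by rw [hPrange]; exact hx
    obtain ⟨t, ht⟩ := this
    rw [← ht, hPP]
  -- TH is quasi-additive on the range of T
  have qaT : ∀ (y : Y) (x : X), TH (y + T x) = TH y + TH (T x) := by
    intro y x
    set s := TH (y + T x) - TH y - TH (T x) with hs
    have hTs : T s = 0 := by
      have h1 : T (TH (y + T x)) = Q (y + T x) := hQeq _
      have h2 : Q (y + T x) = Q y + Q (T x) := by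
        refine hQqa y (T x) ?_
        rw [hQrange]; exact ⟨x, rfl⟩
      have h3 : Q (T x) = T x := by rw [← hQeq, hTT]
      have h4 : Q y = T (TH y) := (hQeq y).symm
      rw [hs, map_sub, map_sub, h1, h2, h3, h4, hQeq, hTT]
      abel
    have hPs : P s = 0 := by
      have hPTTx : P (TH (T x)) = 0 := hPTHy (T x)
      rw [hs, map_sub, map_sub, hPTHy, hPTHy, hPTTx]
      abel
    have hs0 : s = 0 := by rw [← hkerP s hTs, hPs]
    have : TH (y + T x) - (TH y + TH (T x)) = 0 := by rw [← hs0, hs]; abel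
    exact sub_eq_zero.mp this
  -- TH is quasi-additive on the range of T + δT
  have qaBar : ∀ (y : Y) (x : X), TH (y + (T + δT) x) = TH y + TH ((T + δT) x) := by
    intro y x
    have hb : (T + δT) x = T x + δT x := rfl
    have e1 : y + (T + δT) x = (y + T x) + δT x := by rw [hb, add_assoc]
    rw [e1, hq _ _ ⟨x, rfl⟩, qaT, hb, hq _ _ ⟨x, rfl⟩, add_assoc]
  -- key identity
  have key : ∀ x, x + TH (δT x) = P x + TH ((T + δT) x) := by
    intro x
    have hb : (T + δT) x = T x + δT x := rfl
    rw [hb, hq _ _ ⟨x, rfl⟩, hPTx]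
    abel
  -- the linear map
  have addF : ∀ x z : X, TH (δT (x + z)) = TH (δT x) + TH (δT z) := by
    intro x z
    rw [map_add, hq _ _ ⟨z, rfl⟩]
  let L : X →ₗ[ℝ] X :=
    { toFun := fun x => x + TH (δT x)
      map_add' := by intro x z; rw [addF]; abel
      map_smul' := by
        intro c x
        simp only [map_smul, hhom, RingHom.id_apply, smul_add] }
  have hbound : ∃ C, ∀ x, ‖L x‖ ≤ C * ‖x‖ := by
    refine ⟨1 + max M 0 * ‖δT‖, fun x => ?_⟩
    have h1 : ‖TH (δT x)‖ ≤ max M 0 * ‖δT x‖ :=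
      le_trans (hM _) (mul_le_mul_of_nonneg_right (le_max_left _ _) (norm_nonneg _))
    have h2 : ‖δT x‖ ≤ ‖δT‖ * ‖x‖ := δT.le_opNorm x
    have h3 : (0:ℝ) ≤ max M 0 := le_max_right M 0
    calc ‖x + TH (δT x)‖ ≤ ‖x‖ + ‖TH (δT x)‖ := norm_add_le _ _
      _ ≤ ‖x‖ + max M 0 * (‖δT‖ * ‖x‖) := by nlinarith
      _ = (1 + max M 0 * ‖δT‖) * ‖x‖ := by ring
  let A : X →L[ℝ] X := L.mkContinuousOfExistsBound hbound
  have hA : ∀ x, A x = x + TH (δT x) := fun x => rfl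
  refine ⟨A, hA, ?_, ?_⟩
  · -- injective
    intro a b hab
    have hz : A (a - b) = 0 := by rw [map_sub, hab, sub_self]
    have hx : (a - b) + TH (δT (a - b)) = 0 := by rw [← hA]; exact hz
    set x := a - b with hxdef
    have h0 : P x + TH ((T + δT) x) = 0 := by rw [← key]; exact hx
    have hPx : P x = 0 := by
      have h := congrArg P h0
      rw [map_add, hPP, hPTHy, add_zero, map_zero] at h
      exact h
    have hTHbar : TH ((T + δT) x) = 0 := by rw [hPx, zero_add] at h0; exact h0
    have hbar0 : (T + δT) x = 0 := by
      have hm : (T + δT) x ∈ Set.range ⇑(T + δT) ∩ {w | TH w = 0} := ⟨⟨x, rfl⟩, hTHbar⟩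
      rw [hY2] at hm
      exact hm
    have hxTH : x ∈ Set.range TH := by
      have h := hPTx x
      rw [hPx, sub_zero] at h
      exact ⟨T x, h⟩
    have hm : x ∈ ({z | (T + δT) z = 0} ∩ Set.range TH) := ⟨hbar0, hxTH⟩
    rw [hX2] at hm
    exact sub_eq_zero.mp hm
  · -- surjective
    intro w
    obtain ⟨u, ⟨x0, hx0⟩, v, hv, huv⟩ := hY1 (T w)
    obtain ⟨n0, hn0, r0, ⟨y1, hy1⟩, hx0d⟩ := hX1 x0
    obtain ⟨n, hn, v', ⟨y2, hy2⟩, hPwd⟩ := hX1 (P w)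
    simp only [Set.mem_setOf_eq] at hn0 hn hv
    refine ⟨n + r0, ?_⟩
    have hPr0 : P r0 = 0 := by rw [← hy1]; exact hPTHy y1
    have hPv' : P v' = 0 := by rw [← hy2]; exact hPTHy y2
    have hPn : P n = P w := by
      have h := congrArg P hPwd
      rw [map_add, hPv', add_zero] at h
      rw [← h, hPP]
    have h1 : (T + δT) (n + r0) = (T + δT) r0 := by rw [map_add, hn, zero_add]
    have h2 : (T + δT) x0 = (T + δT) r0 := by rw [hx0d, map_add, hn0, zero_add]
    have hTHTw : TH (T w) = TH ((T + δT) x0) := by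
      have : T w = v + (T + δT) x0 := by rw [hx0, huv, add_comm]
      rw [this, qaBar, hv, zero_add]
    show (n + r0) + TH (δT (n + r0)) = w
    rw [key, map_add, hPn, hPr0, add_zero, h1, ← h2, ← hTHTw, hPTx]
    abel
end

section
/- Let X, Y be real Banach spaces, T ∈ B(X,Y) with a quasi-linear projector generalized inverse T^H : Y → X, and let δT ∈ B(X,Y) be such that T^H is quasi-additive on R(δT). Put T̄ = T + δT. Assume X = N(T̄) + R(T^H) with N(T̄) ∩ R(T^H) = {0}, and Y = R(T̄) + N(T^H) with R(T̄) ∩ N(T^H) = {0}. Then I_Y + δT∘T^H has a bounded homogeneous two-sided inverse, and Υ = T^H ∘ (I_Y + δT T^H)^{-1} = (I_X + T^H δT)^{-1} ∘ T^H is a bounded homogeneous operator. -/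
open Metric Set

variable {X Y : Type*} [NormedAddCommGroup X] [NormedSpace ℝ X]
  [NormedAddCommGroup Y] [NormedSpace ℝ Y]

theorem stmt_14 [CompleteSpace X] [CompleteSpace Y] (T δT : X →L[ℝ] Y)
    (TH : Y → X) (hTH : QLPGenInv T TH)
    (hq : QuasiAdditiveOn TH (Set.range ⇑δT))
    (hX1 : ∀ x : X, ∃ u ∈ {z : X | (T + δT) z = 0}, ∃ v ∈ Set.range TH, x = u + v)
    (hX2 : {z : X | (T + δT) z = 0} ∩ Set.range TH = {0})
    (hY1 : ∀ y : Y, ∃ u ∈ Set.range ⇑(T + δT), ∃ v ∈ {w : Y | TH w = 0}, y = u + v)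
    (hY2 : Set.range ⇑(T + δT) ∩ {w : Y | TH w = 0} = {0}) :
    ∃ Ψ : Y → Y, BddHomOp Ψ ∧
      (∀ y, Ψ y + δT (TH (Ψ y)) = y) ∧ (∀ y, Ψ (y + δT (TH y)) = y) ∧
      BddHomOp (fun y => TH (Ψ y)) ∧
      (∀ y, TH (Ψ y) + TH (δT (TH (Ψ y))) = TH y) := by
  obtain ⟨⟨hhom, M, hM⟩, hTHT, hTHTTH, ⟨P, hPP, hPrange, hPT⟩,
    ⟨Q, hQbdd, hQQ, hQqa, hQrange, hQT⟩⟩ := hTH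
  -- basic facts
  have hTHneg : ∀ y, TH (-y) = -TH y := by
    intro y; have := hhom (-1) y; simpa using this
  have hPTH : ∀ y, P (TH y) = 0 := by
    intro y
    have h1 := hPT (TH y)
    rw [hTHTTH y] at h1
    have : TH y - (TH y - P (TH y)) = 0 := by rw [← h1]; abel
    simpa using this
  have qaδ : ∀ (y : Y) (x : X), TH (y + δT x) = TH y + TH (δT x) := fun y x =>
    hq y (δT x) ⟨x, rfl⟩
  have hTHQ : ∀ w, TH (Q w) = TH w := by
    intro w; rw [← hQT w]; exact hTHTTH w
  have qaT : ∀ (y : Y) (u : X), TH (y + T u) = TH y + TH (T u) := by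
    intro y u
    have hQTu : Q (T u) = T u := by rw [← hQT (T u), hTHT u]
    have h1 : Q (y + T u) = Q y + T u := by
      have := hQqa y (T u) ⟨T u, hQTu⟩
      rw [this, hQTu]
    calc TH (y + T u) = TH (Q (y + T u)) := (hTHQ _).symm
      _ = TH (Q y + T u) := by rw [h1]
      _ = TH (T (TH y) + T u) := by rw [hQT]
      _ = TH (T (TH y + u)) := by rw [map_add]
      _ = TH y + u - P (TH y + u) := hPT _
      _ = TH y + (u - P u) := by rw [map_add, hPTH]; abel
      _ = TH y + TH (T u) := by rw [hPT u]
  set M' : ℝ := max M 0 with hM'def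
  have hM'nn : 0 ≤ M' := le_max_right _ _
  have hM' : ∀ y, ‖TH y‖ ≤ M' * ‖y‖ := fun y =>
    (hM y).trans (mul_le_mul_of_nonneg_right (le_max_left _ _) (norm_nonneg _))
  -- the linear map x ↦ TH (δT x)
  have addL : ∀ a b, TH (δT (a + b)) = TH (δT a) + TH (δT b) := by
    intro a b; rw [map_add]; exact hq (δT a) (δT b) ⟨b, rfl⟩
  have smulL : ∀ (c : ℝ) (a : X), TH (δT (c • a)) = c • TH (δT a) := by
    intro c a; rw [map_smul]; exact hhom c (δT a)
  set L : X →L[ℝ] X := LinearMap.mkContinuous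
    { toFun := fun x => TH (δT x), map_add' := addL,
      map_smul' := by intro c a; simpa using smulL c a } (M' * ‖δT‖)
    (fun x => by
      calc ‖TH (δT x)‖ ≤ M' * ‖δT x‖ := hM' _
        _ ≤ M' * (‖δT‖ * ‖x‖) :=
          mul_le_mul_of_nonneg_left (δT.le_opNorm x) hM'nn
        _ = M' * ‖δT‖ * ‖x‖ := by ring) with hLdef
  have hL : ∀ x, L x = TH (δT x) := fun x => rfl
  set B : X →L[ℝ] X := ContinuousLinearMap.id ℝ X + L with hBdef
  have hB : ∀ x, B x = x + TH (δT x) := fun x => rfl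
  -- surjectivity of A = I + δT ∘ TH
  have hAsurj : ∀ y', ∃ z, z + δT (TH z) = y' := by
    intro y'
    obtain ⟨u, hu, w, hw, hy'⟩ := hY1 y'
    obtain ⟨a, ha⟩ := hu
    obtain ⟨n, hn, v, ⟨s, hs⟩, hav⟩ := hX1 a
    refine ⟨T v + w, ?_⟩
    have hPv : P v = 0 := by rw [← hs]; exact hPTH s
    have hTHz : TH (T v + w) = v := by
      rw [add_comm, qaT w v, hw, hPT v, hPv, zero_add, sub_zero]
    have hTn : (T + δT) n = 0 := hn
    have huv : (T + δT) v = u := by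
      rw [← ha, hav, map_add, hTn, zero_add]
    rw [hTHz]
    have : T v + δT v = u := by rw [← huv]; rfl
    rw [add_right_comm, this, hy']
  -- B is injective
  have hBker : ∀ x, B x = 0 → x = 0 := by
    intro x hx
    have hx' : x + TH (δT x) = 0 := hx
    have hxr : x = TH (δT (-x)) := by
      rw [map_neg, hTHneg]
      exact eq_neg_of_add_eq_zero_left hx'
    have hPx : P x = 0 := by rw [hxr]; exact hPTH _
    have hTHTbar : TH ((T + δT) x) = 0 := by
      have h1 : (T + δT) x = T x + δT x := rfl
      rw [h1, qaδ, hPT, hPx, sub_zero, hx']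
    have hmem : (T + δT) x ∈ Set.range ⇑(T + δT) ∩ {w : Y | TH w = 0} :=
      ⟨⟨x, rfl⟩, hTHTbar⟩
    rw [hY2] at hmem
    have h1 : (T + δT) x = 0 := hmem
    have hmem2 : x ∈ {z : X | (T + δT) z = 0} ∩ Set.range TH :=
      ⟨h1, ⟨δT (-x), hxr.symm⟩⟩
    rw [hX2] at hmem2
    exact hmem2
  have hBinj : Function.Injective B := by
    intro a b hab
    have := hBker (a - b) (by rw [map_sub, hab, sub_self])
    exact sub_eq_zero.mp this
  -- B is surjective
  have hBsurj : Function.Surjective B := by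
    intro x'
    obtain ⟨n, hn, v, ⟨s, hs⟩, hx'⟩ := hX1 x'
    obtain ⟨z, hz⟩ := hAsurj (s + T n)
    refine ⟨n + TH z, ?_⟩
    have hTn : (T + δT) n = 0 := hn
    have hδTn : δT n = -(T n) := by
      have h1 : T n + δT n = 0 := hTn
      exact eq_neg_of_add_eq_zero_right h1
    have hBn : B n = P n := by
      rw [hB, hδTn, hTHneg, hPT]; abel
    have hBTHz : B (TH z) = TH (s + T n) := by
      rw [hB, ← qaδ, hz]
    rw [map_add, hBn, hBTHz, qaT, hPT, hx', hs]
    abel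
  have hkerB : B.ker = ⊥ := LinearMap.ker_eq_bot.mpr hBinj
  have hrangeB : B.range = ⊤ := LinearMap.range_eq_top.mpr hBsurj
  set E := ContinuousLinearEquiv.ofBijective B hkerB hrangeB with hEdef
  have hSB : ∀ x, E.symm (B x) = x := fun x =>
    ContinuousLinearEquiv.ofBijective_symm_apply_apply B hkerB hrangeB x
  have hBS : ∀ x, B (E.symm x) = x := fun x =>
    ContinuousLinearEquiv.ofBijective_apply_symm_apply B hkerB hrangeB x
  set S : X →L[ℝ] X := E.symm.toContinuousLinearMap with hSdef
  have hS : ∀ x, S x = E.symm x := fun x => rfl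
  have hBS' : ∀ x, B (S x) = x := fun x => by rw [hS]; exact hBS x
  have hSB' : ∀ x, S (B x) = x := fun x => by rw [hS]; exact hSB x
  refine ⟨fun y => y - δT (S (TH y)), ?_, ?_, ?_, ?_, ?_⟩
  · -- BddHomOp Ψ
    constructor
    · intro c y
      show c • y - δT (S (TH (c • y))) = c • (y - δT (S (TH y)))
      rw [hhom c y, map_smul, map_smul, smul_sub]
    · refine ⟨1 + ‖δT‖ * ‖S‖ * M', fun y => ?_⟩
      show ‖y - δT (S (TH y))‖ ≤ (1 + ‖δT‖ * ‖S‖ * M') * ‖y‖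
      calc ‖y - δT (S (TH y))‖ ≤ ‖y‖ + ‖δT (S (TH y))‖ := norm_sub_le _ _
        _ ≤ ‖y‖ + ‖δT‖ * (‖S‖ * (M' * ‖y‖)) := by
            have h1 : ‖δT (S (TH y))‖ ≤ ‖δT‖ * (‖S‖ * (M' * ‖y‖)) := by
              refine (δT.le_opNorm _).trans ?_
              refine mul_le_mul_of_nonneg_left ?_ (norm_nonneg _)
              refine (S.le_opNorm _).trans ?_
              exact mul_le_mul_of_nonneg_left (hM' y) (norm_nonneg _)
            linarith
        _ = (1 + ‖δT‖ * ‖S‖ * M') * ‖y‖ := by ring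
  · -- A (Ψ y) = y
    intro y
    show (y - δT (S (TH y))) + δT (TH (y - δT (S (TH y)))) = y
    have hTHΨ : TH (y - δT (S (TH y))) = S (TH y) := by
      have h1 : TH (y + δT (-(S (TH y)))) = TH y + TH (δT (-(S (TH y)))) := qaδ _ _
      have h2 : TH (δT (S (TH y))) = B (S (TH y)) - S (TH y) := by
        rw [hB]; abel
      rw [sub_eq_add_neg, ← map_neg δT, h1, map_neg δT, hTHneg, h2, hBS']
      abel
    rw [hTHΨ]; abel
  · -- Ψ (A y) = y
    intro y
    show (y + δT (TH y)) - δT (S (TH (y + δT (TH y)))) = y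
    have h1 : TH (y + δT (TH y)) = B (TH y) := by rw [qaδ]; rfl
    rw [h1, hSB']
    abel
  · -- BddHomOp (TH ∘ Ψ)
    have hTHΨ : ∀ y, TH (y - δT (S (TH y))) = S (TH y) := by
      intro y
      have h1 : TH (y + δT (-(S (TH y)))) = TH y + TH (δT (-(S (TH y)))) := qaδ _ _
      have h2 : TH (δT (S (TH y))) = B (S (TH y)) - S (TH y) := by
        rw [hB]; abel
      rw [sub_eq_add_neg, ← map_neg δT, h1, map_neg δT, hTHneg, h2, hBS']
      abel
    constructor
    · intro c y
      show TH (c • y - δT (S (TH (c • y)))) = c • TH (y - δT (S (TH y)))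
      rw [hTHΨ, hhom c y, map_smul, hTHΨ]
    · refine ⟨‖S‖ * M', fun y => ?_⟩
      show ‖TH (y - δT (S (TH y)))‖ ≤ ‖S‖ * M' * ‖y‖
      rw [hTHΨ]
      calc ‖S (TH y)‖ ≤ ‖S‖ * ‖TH y‖ := S.le_opNorm _
        _ ≤ ‖S‖ * (M' * ‖y‖) :=
          mul_le_mul_of_nonneg_left (hM' y) (norm_nonneg _)
        _ = ‖S‖ * M' * ‖y‖ := by ring
  · -- final identity
    intro y
    show TH (y - δT (S (TH y))) + TH (δT (TH (y - δT (S (TH y))))) = TH y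
    have hTHΨ : TH (y - δT (S (TH y))) = S (TH y) := by
      have h1 : TH (y + δT (-(S (TH y)))) = TH y + TH (δT (-(S (TH y)))) := qaδ _ _
      have h2 : TH (δT (S (TH y))) = B (S (TH y)) - S (TH y) := by
        rw [hB]; abel
      rw [sub_eq_add_neg, ← map_neg δT, h1, map_neg δT, hTHneg, h2, hBS']
      abel
    rw [hTHΨ]
    have h2 : TH (δT (S (TH y))) = B (S (TH y)) - S (TH y) := by rw [hB]; abel
    rw [h2, hBS']
    abel
end

section
/- Let X, Y be real Banach spaces, T ∈ B(X,Y) with a quasi-linear projector generalized inverse T^H : Y → X, and let δT ∈ B(X,Y) be such that T^H is quasi-additive on R(δT). Put T̄ = T + δT. Then the following are equivalent: (1) I_X + T^H δT is invertible in B(X,X) and R(T̄) ∩ N(T^H) = {0}; (2) I_X + T^H δT is invertible in B(X,X) and Υ = T^H ∘ (I_Y + δT T^H)^{-1} = (I_X + T^H δT)^{-1} ∘ T^H is a quasi-linear projector generalized inverse of T̄; (3) X = N(T̄) + R(T^H) with N(T̄) ∩ R(T^H) = {0}, and Y = R(T̄) + N(T^H) with R(T̄) ∩ N(T^H) = {0}.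 -/
open Metric Set

variable {X Y : Type*} [NormedAddCommGroup X] [NormedSpace ℝ X]
  [NormedAddCommGroup Y] [NormedSpace ℝ Y]

theorem stmt_15 [CompleteSpace X] [CompleteSpace Y] (T δT : X →L[ℝ] Y)
    (TH : Y → X) (hTH : QLPGenInv T TH)
    (hq : QuasiAdditiveOn TH (Set.range ⇑δT)) :
    [ (∃ A : (X →L[ℝ] X)ˣ, ∀ x, (A : X →L[ℝ] X) x = x + TH (δT x)) ∧
        Set.range ⇑(T + δT) ∩ {w : Y | TH w = 0} = {0},
      ∃ A : (X →L[ℝ] X)ˣ, (∀ x, (A : X →L[ℝ] X) x = x + TH (δT x)) ∧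
        ∃ Ψ : Y → Y, (∀ y, Ψ y + δT (TH (Ψ y)) = y) ∧ (∀ y, Ψ (y + δT (TH y)) = y) ∧
          (∀ y, TH (Ψ y) = (↑A⁻¹ : X →L[ℝ] X) (TH y)) ∧
          QLPGenInv (T + δT) (fun y => TH (Ψ y)),
      ((∀ x : X, ∃ u ∈ {z : X | (T + δT) z = 0}, ∃ v ∈ Set.range TH, x = u + v) ∧
        {z : X | (T + δT) z = 0} ∩ Set.range TH = {0}) ∧
      ((∀ y : Y, ∃ u ∈ Set.range ⇑(T + δT), ∃ v ∈ {w : Y | TH w = 0}, y = u + v) ∧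
        Set.range ⇑(T + δT) ∩ {w : Y | TH w = 0} = {0}) ].TFAE := by
  obtain ⟨⟨hhom, M, hM⟩, h1, h2, ⟨P, hPP, hPrange, hTHT⟩,
    ⟨Q, ⟨Qhom, MQ, hMQ⟩, hQQ, hQqa, hQrange, hTTH⟩⟩ := hTH
  set T' := T + δT with hT'
  have hT'x : ∀ x, T' x = T x + δT x := fun x => rfl
  have hTH0 : TH 0 = 0 := by
    have := hhom 0 0; simpa using this
  have hTHneg : ∀ y, TH (-y) = -TH y := fun y => by
    have := hhom (-1) y; simpa using this
  have hPTH : ∀ y, P (TH y) = 0 := fun y => by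
    have h := h2 y
    rw [hTHT (TH y)] at h
    exact sub_eq_self.mp h
  have hTP : ∀ x, T (P x) = 0 := fun x => by
    have : P x ∈ Set.range ⇑P := ⟨x, rfl⟩
    rw [hPrange] at this; exact this
  have hTHQ : ∀ y, TH (Q y) = TH y := fun y => by rw [← hTTH, h2]
  have hqT : ∀ (a : Y) (x : X), TH (a + T x) = TH a + TH (T x) := fun a x => by
    have hQT : Q (T x) = T x := by rw [← hTTH, h1]
    have h3 : Q (a + T x) = Q a + T x := by
      rw [hQqa a (T x) (by rw [hQrange]; exact ⟨x, rfl⟩), hQT]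
    obtain ⟨u, hu⟩ : Q a ∈ Set.range ⇑T := by rw [← hQrange]; exact ⟨a, rfl⟩
    calc TH (a + T x) = TH (Q (a + T x)) := (hTHQ _).symm
      _ = TH (T u + T x) := by rw [h3, ← hu]
      _ = TH (T (u + x)) := by rw [map_add]
      _ = (u + x) - P (u + x) := hTHT _
      _ = (u - P u) + (x - P x) := by rw [map_add]; abel
      _ = TH (T u) + TH (T x) := by rw [hTHT, hTHT]
      _ = TH a + TH (T x) := by rw [hu, hTHQ]
  -- B : the continuous linear map x ↦ TH (δT x)
  set M' : ℝ := max M 0 with hM'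
  have hM'le : ∀ y, ‖TH y‖ ≤ M' * ‖y‖ := fun y =>
    le_trans (hM y) (mul_le_mul_of_nonneg_right (le_max_left _ _) (norm_nonneg _))
  set B : X →L[ℝ] X := LinearMap.mkContinuous
    { toFun := fun x => TH (δT x),
      map_add' := fun x z => by
        show TH (δT (x + z)) = TH (δT x) + TH (δT z)
        rw [map_add]; exact hq (δT x) (δT z) ⟨z, rfl⟩,
      map_smul' := fun c x => by
        show TH (δT (c • x)) = c • TH (δT x)
        rw [map_smul]; exact hhom c (δT x) }
    (M' * ‖δT‖) (fun x => by
      calc ‖TH (δT x)‖ ≤ M' * ‖δT x‖ := hM'le _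
        _ ≤ M' * (‖δT‖ * ‖x‖) :=
          mul_le_mul_of_nonneg_left (δT.le_opNorm x) (le_max_right _ _)
        _ = M' * ‖δT‖ * ‖x‖ := by ring) with hBdef
  have hB : ∀ x, B x = TH (δT x) := fun _ => rfl
  have hkey : ∀ x, TH (T' x) = x + B x - P x := fun x => by
    rw [hT'x, hq (T x) (δT x) ⟨x, rfl⟩, hTHT, hB]; abel
  have hqT' : ∀ (a : Y) (x : X), TH (a + T' x) = TH a + TH (T' x) := fun a x => by
    rw [hT'x, ← add_assoc, hq (a + T x) (δT x) ⟨x, rfl⟩, hqT a x,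
      hq (T x) (δT x) ⟨x, rfl⟩, add_assoc]
  tfae_have 1 → 2 := by
    rintro ⟨⟨A, hA⟩, hcap⟩
    have hAx : ∀ x, (A : X →L[ℝ] X) x = x + B x := hA
    have hIA : ∀ x, (↑A⁻¹ : X →L[ℝ] X) ((A : X →L[ℝ] X) x) = x := fun x => by
      rw [← ContinuousLinearMap.mul_apply, A.inv_mul, ContinuousLinearMap.one_apply]
    have hAI : ∀ x, (A : X →L[ℝ] X) ((↑A⁻¹ : X →L[ℝ] X) x) = x := fun x => by
      rw [← ContinuousLinearMap.mul_apply, A.mul_inv, ContinuousLinearMap.one_apply]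
    have hBA : ∀ z, (↑A⁻¹ : X →L[ℝ] X) z + B ((↑A⁻¹ : X →L[ℝ] X) z) = z := fun z => by
      rw [← hAx, hAI]
    have hzero : ∀ x, TH (T' x) = 0 → T' x = 0 := fun x hx => by
      have : T' x ∈ Set.range ⇑T' ∩ {w | TH w = 0} := ⟨⟨x, rfl⟩, hx⟩
      rw [hcap] at this; exact this
    have claim1 : ∀ x, T x = 0 → T' ((↑A⁻¹ : X →L[ℝ] X) x) = 0 := fun x hx => by
      set v := (↑A⁻¹ : X →L[ℝ] X) x with hv
      have hvB : v + B v = x := hBA x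
      have hTv : T v = -(Q (δT v)) := by
        have e1 : T v = T x - T (B v) := by
          rw [← hvB, map_add]; abel
        rw [hx, hB, hTTH] at e1
        rw [e1]; abel
      have hT'v : T' v = -(Q (δT v)) + δT v := by rw [hT'x, hTv]
      have : TH (T' v) = 0 := by
        rw [hT'v, hq (-(Q (δT v))) (δT v) ⟨v, rfl⟩, hTHneg, hTHQ]; abel
      exact hzero v this
    have claim3 : ∀ z, T' z = 0 → z = (↑A⁻¹ : X →L[ℝ] X) (P z) := fun z hz => by
      have e1 : TH (T' z) = z + B z - P z := hkey z
      rw [hz, hTH0] at e1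
      have e2 : (A : X →L[ℝ] X) z = P z := by
        rw [hAx]
        have := e1.symm
        rwa [sub_eq_zero] at this
      rw [← e2, hIA]
    have claim2 : ∀ x, P ((↑A⁻¹ : X →L[ℝ] X) (P x)) = P x := fun x => by
      have h3 := claim3 _ (claim1 (P x) (hTP x))
      have := congrArg (A : X →L[ℝ] X) h3
      rw [hAI, hAI] at this
      exact this.symm
    have hPAv : ∀ y, P ((↑A⁻¹ : X →L[ℝ] X) (TH y)) = 0 := fun y => by
      set v := (↑A⁻¹ : X →L[ℝ] X) (TH y) with hv
      have e := congrArg P (hBA (TH y))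
      rw [map_add, hPTH, hB, hPTH, add_zero] at e
      exact e
    set S : Y → X := fun y => (↑A⁻¹ : X →L[ℝ] X) (TH y) with hSdef
    have hS : ∀ y, S y = (↑A⁻¹ : X →L[ℝ] X) (TH y) := fun _ => rfl
    set Ψ : Y → Y := fun y => y - δT ((↑A⁻¹ : X →L[ℝ] X) (TH y)) with hΨdef
    have hΨ : ∀ y, Ψ y = y - δT ((↑A⁻¹ : X →L[ℝ] X) (TH y)) := fun _ => rfl
    have hTHΨ : ∀ y, TH (Ψ y) = S y := fun y => by
      rw [hΨ, hS]
      set v := (↑A⁻¹ : X →L[ℝ] X) (TH y) with hv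
      have e1 : y - δT v = y + δT (-v) := by rw [map_neg]; abel
      have e2 : B v = TH y - v := by
        have := hBA (TH y); rw [← this]; abel
      rw [e1, hq y (δT (-v)) ⟨-v, rfl⟩, ← hB, map_neg, e2]; abel
    have hST' : ∀ x, S (T' x) = x - (↑A⁻¹ : X →L[ℝ] X) (P x) := fun x => by
      rw [hS, hkey, ← hAx, map_sub, hIA]
    have hTST : ∀ x, T' (S (T' x)) = T' x := fun x => by
      rw [hST', map_sub, claim1 (P x) (hTP x)]; abel
    have hSTS : ∀ y, S (T' (S y)) = S y := fun y => by
      rw [hST' (S y), hS, hPAv, map_zero, sub_zero]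
    refine ⟨A, hA, Ψ, ?_, ?_, fun y => (hTHΨ y).trans (hS y), ?_⟩
    · intro y
      rw [hTHΨ, hS, hΨ]; abel
    · intro y
      have e1 : TH (y + δT (TH y)) = (A : X →L[ℝ] X) (TH y) := by
        rw [hq y (δT (TH y)) ⟨TH y, rfl⟩, hAx, hB]
      rw [hΨ, e1, hIA]; abel
    · have hfun : (fun y => TH (Ψ y)) = S := funext hTHΨ
      rw [hfun]
      refine ⟨⟨?_, ?_⟩, hTST, hSTS, ?_, ?_⟩
      · intro c y
        rw [hS, hS, hhom, map_smul]
      · refine ⟨‖(↑A⁻¹ : X →L[ℝ] X)‖ * M', fun y => ?_⟩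
        rw [hS]
        calc ‖(↑A⁻¹ : X →L[ℝ] X) (TH y)‖ ≤ ‖(↑A⁻¹ : X →L[ℝ] X)‖ * ‖TH y‖ :=
              (↑A⁻¹ : X →L[ℝ] X).le_opNorm _
          _ ≤ ‖(↑A⁻¹ : X →L[ℝ] X)‖ * (M' * ‖y‖) :=
              mul_le_mul_of_nonneg_left (hM'le y) (norm_nonneg _)
          _ = ‖(↑A⁻¹ : X →L[ℝ] X)‖ * M' * ‖y‖ := by ring
      · refine ⟨(↑A⁻¹ : X →L[ℝ] X).comp P, ?_, ?_, fun x => hST' x⟩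
        · intro x
          show (↑A⁻¹ : X →L[ℝ] X) (P ((↑A⁻¹ : X →L[ℝ] X) (P x))) = (↑A⁻¹ : X →L[ℝ] X) (P x)
          rw [claim2]
        ext z
        constructor
        · rintro ⟨x, rfl⟩
          exact claim1 (P x) (hTP x)
        · intro hz
          exact ⟨z, (claim3 z hz).symm⟩
      · refine ⟨fun y => T' (S y), ⟨?_, ?_⟩, ?_, ?_, ?_, fun y => rfl⟩
        · intro c y
          show T' (S (c • y)) = c • T' (S y)
          rw [hS, hS, hhom, map_smul, map_smul]
        · refine ⟨‖T'‖ * (‖(↑A⁻¹ : X →L[ℝ] X)‖ * M'), fun y => ?_⟩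
          show ‖T' (S y)‖ ≤ _
          rw [hS]
          calc ‖T' ((↑A⁻¹ : X →L[ℝ] X) (TH y))‖
              ≤ ‖T'‖ * ‖(↑A⁻¹ : X →L[ℝ] X) (TH y)‖ := T'.le_opNorm _
            _ ≤ ‖T'‖ * (‖(↑A⁻¹ : X →L[ℝ] X)‖ * ‖TH y‖) :=
              mul_le_mul_of_nonneg_left (ContinuousLinearMap.le_opNorm _ _) (norm_nonneg _)
            _ ≤ ‖T'‖ * (‖(↑A⁻¹ : X →L[ℝ] X)‖ * (M' * ‖y‖)) := by
              refine mul_le_mul_of_nonneg_left ?_ (norm_nonneg _)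
              exact mul_le_mul_of_nonneg_left (hM'le y) (norm_nonneg _)
            _ = ‖T'‖ * (‖(↑A⁻¹ : X →L[ℝ] X)‖ * M') * ‖y‖ := by ring
        · intro y
          show T' (S (T' (S y))) = T' (S y)
          rw [hSTS]
        · rintro a z ⟨w, rfl⟩
          show T' (S (a + T' (S w))) = T' (S a) + T' (S (T' (S w)))
          have e1 : S (a + T' (S w)) = S a + S (T' (S w)) := by
            simp only [hS]
            rw [hqT' a, map_add]
          rw [e1, map_add]
        · ext y
          constructor
          · rintro ⟨w, rfl⟩
            exact ⟨S w, rfl⟩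
          · rintro ⟨x, rfl⟩
            exact ⟨T' x, hTST x⟩
  tfae_have 2 → 3 := by
    rintro ⟨A, hA, Ψ, hΨ1, hΨ2, hΨ3, hQLP⟩
    have hAx : ∀ x, (A : X →L[ℝ] X) x = x + B x := hA
    have hIA : ∀ x, (↑A⁻¹ : X →L[ℝ] X) ((A : X →L[ℝ] X) x) = x := fun x => by
      rw [← ContinuousLinearMap.mul_apply, A.inv_mul, ContinuousLinearMap.one_apply]
    have hAI : ∀ x, (A : X →L[ℝ] X) ((↑A⁻¹ : X →L[ℝ] X) x) = x := fun x => by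
      rw [← ContinuousLinearMap.mul_apply, A.mul_inv, ContinuousLinearMap.one_apply]
    obtain ⟨hSbdd, hTST, hSTS, ⟨P', hP'P', hP'range, hST'⟩,
      ⟨Q', hQ'bdd, hQ'Q', hQ'qa, hQ'range, hT'S⟩⟩ := hQLP
    have hST'b : ∀ x, TH (Ψ (T' x)) = x - P' x := hST'
    have hT'Sb : ∀ y, T' (TH (Ψ y)) = Q' y := hT'S
    constructor
    · constructor
      · intro x
        refine ⟨P' x, ?_, TH (Ψ (T' x)), ⟨Ψ (T' x), rfl⟩, ?_⟩
        · show T' (P' x) = 0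
          have : P' x ∈ Set.range ⇑P' := ⟨x, rfl⟩
          rw [hP'range] at this
          exact this
        · rw [hST'b x]; abel
      · apply Set.eq_singleton_iff_unique_mem.mpr
        constructor
        · exact ⟨map_zero T', ⟨0, hTH0⟩⟩
        · rintro z ⟨hz1, y, hy⟩
          have e1 : TH (T' z) = z + B z - P z := hkey z
          rw [hz1, hTH0] at e1
          have e2 : P z = 0 := by rw [← hy, hPTH]
          rw [e2, sub_zero] at e1
          have e3 : (A : X →L[ℝ] X) z = 0 := by rw [hAx, ← e1]
          have := congrArg (↑A⁻¹ : X →L[ℝ] X) e3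
          rw [hIA, map_zero] at this
          exact this
    · constructor
      · intro y
        refine ⟨Q' y, ?_, y - Q' y, ?_, by abel⟩
        · rw [← hQ'range]
          exact ⟨y, rfl⟩
        · show TH (y - Q' y) = 0
          have e0 : Q' y = T' (TH (Ψ y)) := (hT'Sb y).symm
          have e1 : y - Q' y = y + T' (-(TH (Ψ y))) := by
            rw [map_neg, e0]; abel
          have e2 : TH (T' (TH (Ψ y))) = TH y := by
            rw [hkey, hPTH, sub_zero, hΨ3, ← hAx, hAI]
          rw [e1, hqT' y (-(TH (Ψ y))), map_neg, hTHneg, e2]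
          abel
      · apply Set.eq_singleton_iff_unique_mem.mpr
        constructor
        · exact ⟨⟨0, map_zero T'⟩, hTH0⟩
        · rintro z ⟨hz1, hz2⟩
          rw [← hQ'range] at hz1
          obtain ⟨w, hw⟩ := hz1
          have e1 : Q' z = z := by rw [← hw, hQ'Q']
          have e2 : Q' z = T' (TH (Ψ z)) := (hT'S z).symm
          rw [hΨ3, hz2, map_zero, map_zero] at e2
          rw [← e1, e2]
  tfae_have 3 → 1 := by
    rintro ⟨⟨hXsum, hXcap⟩, hYsum, hYcap⟩
    refine ⟨?_, hYcap⟩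
    set Aop : X →L[ℝ] X := ContinuousLinearMap.id ℝ X + B with hAopdef
    have hAopx : ∀ x, Aop x = x + B x := fun x => rfl
    have stepa : ∀ w : X, ∃ u, T' u = 0 ∧ P u = P w := fun w => by
      obtain ⟨u, hu, v, ⟨y, hy⟩, hw⟩ := hXsum (P w)
      refine ⟨u, hu, ?_⟩
      have e := congrArg P hw
      rw [hPP, map_add, ← hy, hPTH, add_zero] at e
      exact e.symm
    have stepb : ∀ u, T' u = 0 → Aop u = P u := fun u hu => by
      have hδ : δT u = -(T u) := by
        have e : T u + δT u = 0 := hu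
        exact eq_neg_of_add_eq_zero_left (by rw [add_comm]; exact e)
      have e2 : B u = P u - u := by
        rw [hB, hδ, hTHneg, hTHT]; abel
      rw [hAopx, e2]; abel
    have hinj : ∀ z, Aop z = 0 → z = 0 := fun z hz => by
      have hzB : z + B z = 0 := by rw [← hAopx]; exact hz
      have e1 : TH (T' z) = -(P z) := by
        rw [hkey, hzB]; abel
      have e2 : P z = 0 := by
        have e := hPTH (T' z)
        rw [e1, map_neg, hPP] at e
        simpa using e
      have e3 : TH (T' z) = 0 := by rw [e1, e2, neg_zero]
      have e4 : T' z = 0 := by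
        have : T' z ∈ Set.range ⇑T' ∩ {w | TH w = 0} := ⟨⟨z, rfl⟩, e3⟩
        rw [hYcap] at this
        exact this
      have e5 : z = -(B z) := by rw [eq_neg_iff_add_eq_zero]; exact hzB
      have e6 : z ∈ {z | T' z = 0} ∩ Set.range TH := by
        refine ⟨e4, δT (-z), ?_⟩
        rw [map_neg, hTHneg, ← hB, ← e5]
      rw [hXcap] at e6
      exact e6
    have hsurj : ∀ x' : X, ∃ x, Aop x = x' := fun x' => by
      obtain ⟨yu, ⟨u', hu'⟩, w', hw', hy⟩ := hYsum (T x')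
      have hw'0 : TH w' = 0 := hw'
      obtain ⟨u'', hu''0, hu''P⟩ := stepa u'
      obtain ⟨u, hu0, huP⟩ := stepa x'
      refine ⟨u + u' - u'', ?_⟩
      have e1 : TH (T x') = TH (T' u') := by
        rw [hy, ← hu', add_comm (T' u') w', hqT' w' u', hw'0, zero_add]
      have e2 : TH (T x') = x' - P x' := hTHT x'
      have e3 : TH (T' u') = u' + B u' - P u' := hkey u'
      have e4 : u' + B u' - P u' = x' - P x' := by rw [← e3, ← e1, e2]
      have e6 : u' + B u' = x' - P x' + P u' := by rw [← e4]; abel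
      rw [map_sub, map_add, stepb u hu0, stepb u'' hu''0, hAopx u', huP, hu''P, e6]
      abel
    have hker : LinearMap.ker (Aop : X →ₗ[ℝ] X) = ⊥ := by
      apply LinearMap.ker_eq_bot'.mpr
      intro z hz
      exact hinj z hz
    have hrange : LinearMap.range (Aop : X →ₗ[ℝ] X) = ⊤ := by
      apply LinearMap.range_eq_top.mpr
      intro x'
      exact hsurj x'
    let e : X ≃L[ℝ] X := ContinuousLinearEquiv.ofBijective Aop hker hrange
    refine ⟨⟨(e : X →L[ℝ] X), (e.symm : X →L[ℝ] X), ?_, ?_⟩, fun x => ?_⟩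
    · ext x
      simp [ContinuousLinearMap.mul_apply]
    · ext x
      simp [ContinuousLinearMap.mul_apply]
    · show (e : X →L[ℝ] X) x = x + TH (δT x)
      have he : (e : X →L[ℝ] X) x = Aop x := rfl
      rw [he, hAopx, hB]
  tfae_finish
end

section
/- Let X be a real Banach space and A ∈ B(X,X). Suppose there exist constants λ₁, λ₂ ∈ [0,1) such that ‖Ax‖ ≤ λ₁‖x‖ + λ₂‖(I + A)x‖ for all x ∈ X. Then I + A : X → X is bijective, and for all x ∈ X: ((1−λ₁)/(1+λ₂))‖x‖ ≤ ‖(I+A)x‖ ≤ ((1+λ₁)/(1−λ₂))‖x‖ and ((1−λ₂)/(1+λ₁))‖x‖ ≤ ‖(I+A)^{-1}x‖ ≤ ((1+λ₂)/(1−λ₁))‖x‖. -/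
open Metric Set

variable {X Y : Type*} [NormedAddCommGroup X] [NormedSpace ℝ X]
  [NormedAddCommGroup Y] [NormedSpace ℝ Y]

theorem stmt_16 {X : Type*} [NormedAddCommGroup X] [NormedSpace ℝ X] [CompleteSpace X]
    (A : X →L[ℝ] X) (l1 l2 : ℝ)
    (hl1 : 0 ≤ l1) (hl1' : l1 < 1) (hl2 : 0 ≤ l2) (hl2' : l2 < 1)
    (h : ∀ x : X, ‖A x‖ ≤ l1 * ‖x‖ + l2 * ‖x + A x‖) :
    Function.Bijective (fun x : X => x + A x) ∧
    (∀ x : X, (1 - l1) / (1 + l2) * ‖x‖ ≤ ‖x + A x‖ ∧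
      ‖x + A x‖ ≤ (1 + l1) / (1 - l2) * ‖x‖) ∧
    (∀ x y : X, y + A y = x →
      (1 - l2) / (1 + l1) * ‖x‖ ≤ ‖y‖ ∧ ‖y‖ ≤ (1 + l2) / (1 - l1) * ‖x‖) := by
  -- basic norm bounds
  have hbound : ∀ x : X, (1 - l1) / (1 + l2) * ‖x‖ ≤ ‖x + A x‖ ∧
      ‖x + A x‖ ≤ (1 + l1) / (1 - l2) * ‖x‖ := by
    intro x
    have hx := h x
    have hxe : x = (x + A x) - A x := by abel
    have h1 : ‖x‖ ≤ ‖x + A x‖ + ‖A x‖ := by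
      calc ‖x‖ = ‖(x + A x) - A x‖ := by rw [← hxe]
        _ ≤ ‖x + A x‖ + ‖A x‖ := norm_sub_le _ _
    have h2 : ‖x + A x‖ ≤ ‖x‖ + ‖A x‖ := norm_add_le _ _
    constructor
    · rw [div_mul_eq_mul_div, div_le_iff₀ (by linarith)]
      nlinarith [norm_nonneg (A x), norm_nonneg x, norm_nonneg (x + A x)]
    · rw [div_mul_eq_mul_div, le_div_iff₀ (by linarith)]
      nlinarith [norm_nonneg (A x), norm_nonneg x, norm_nonneg (x + A x)]
  -- constants
  set m := max l1 l2 with hm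
  have hm1 : m < 1 := max_lt hl1' hl2'
  have hm0 : 0 ≤ m := le_trans hl1 (le_max_left _ _)
  set c : ℝ := (1 - m) / 2 with hc
  have hcpos : 0 < c := by rw [hc]; linarith
  -- the family of operators
  set T : ℝ → X →L[ℝ] X := fun t => 1 + t • A with hT
  have hTapply : ∀ t x, T t x = x + t • A x := by
    intro t x
    simp [hT, ContinuousLinearMap.add_apply, ContinuousLinearMap.one_def]
  -- uniform lower bound
  have key : ∀ t ∈ Set.Icc (0:ℝ) 1, ∀ x : X, c * ‖x‖ ≤ ‖T t x‖ := by
    rintro t ⟨ht0, ht1⟩ x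
    have hx := h x
    have hdecomp : x + A x = (x + t • A x) + (1 - t) • A x := by
      rw [sub_smul, one_smul]; abel
    have h2 : ‖x + A x‖ ≤ ‖T t x‖ + (1 - t) * ‖A x‖ := by
      rw [hTapply, hdecomp]
      calc ‖(x + t • A x) + (1 - t) • A x‖ ≤ ‖x + t • A x‖ + ‖(1 - t) • A x‖ :=
            norm_add_le _ _
        _ = ‖x + t • A x‖ + (1 - t) * ‖A x‖ := by
            rw [norm_smul, Real.norm_eq_abs, abs_of_nonneg (by linarith)]
    have h3 : ‖x‖ - t * ‖A x‖ ≤ ‖T t x‖ := by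
      have hxe : x = (x + t • A x) - t • A x := by abel
      have := calc ‖x‖ = ‖(x + t • A x) - t • A x‖ := by rw [← hxe]
        _ ≤ ‖x + t • A x‖ + ‖t • A x‖ := norm_sub_le _ _
        _ = ‖x + t • A x‖ + t * ‖A x‖ := by
            rw [norm_smul, Real.norm_eq_abs, abs_of_nonneg ht0]
      rw [hTapply]; linarith
    have hl1m : l1 ≤ m := le_max_left _ _
    have hl2m : l2 ≤ m := le_max_right _ _
    have hw0 : (0:ℝ) ≤ ‖T t x‖ := norm_nonneg _
    have hu0 : (0:ℝ) ≤ ‖x‖ := norm_nonneg _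
    have ha0 : (0:ℝ) ≤ ‖A x‖ := norm_nonneg _
    have ha : (1 - l2 * (1 - t)) * ‖A x‖ ≤ l1 * ‖x‖ + l2 * ‖T t x‖ := by
      linarith [mul_le_mul_of_nonneg_left h2 hl2]
    have hta : t * ((1 - l2 * (1 - t)) * ‖A x‖) ≤ t * (l1 * ‖x‖ + l2 * ‖T t x‖) :=
      mul_le_mul_of_nonneg_left ha ht0
    have he0 : l2 * (1 - t) ≤ l2 * 1 := mul_le_mul_of_nonneg_left (by linarith) hl2
    have hD0 : (0:ℝ) ≤ 1 - l2 * (1 - t) := by linarith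
    have hstep : ‖x‖ * (1 - l2 * (1 - t) - t * l1) ≤
        ‖T t x‖ * ((1 - l2 * (1 - t)) + t * l2) := by
      linarith [mul_le_mul_of_nonneg_left h3 hD0]
    have hfin1 : ‖x‖ * (1 - m) ≤ ‖x‖ * (1 - l2 * (1 - t) - t * l1) := by
      have e1 : l2 * (1 - t) ≤ m * (1 - t) := mul_le_mul_of_nonneg_right hl2m (by linarith)
      have e2 : t * l1 ≤ t * m := mul_le_mul_of_nonneg_left hl1m ht0
      exact mul_le_mul_of_nonneg_left (by linarith) hu0
    have hfin2 : ‖T t x‖ * ((1 - l2 * (1 - t)) + t * l2) ≤ ‖T t x‖ * 2 := by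
      have e3 : t * l2 ≤ 1 * l2 := mul_le_mul_of_nonneg_right ht1 hl2
      exact mul_le_mul_of_nonneg_left (by linarith) hw0
    rw [hc]
    linarith [hstep, hfin1, hfin2]
  -- inverse norm bound for a unit in the family
  have hinvb : ∀ s ∈ Set.Icc (0:ℝ) 1, ∀ u : (X →L[ℝ] X)ˣ, (↑u : X →L[ℝ] X) = T s →
      ∀ y : X, ‖(↑u⁻¹ : X →L[ℝ] X) y‖ ≤ (1 / c) * ‖y‖ := by
    intro s hs u hu y
    have h1 : T s ((↑u⁻¹ : X →L[ℝ] X) y) = y := by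
      rw [← hu]
      show ((↑u * ↑u⁻¹ : X →L[ℝ] X)) y = y
      rw [u.mul_inv]
      rfl
    have hk := key s hs ((↑u⁻¹ : X →L[ℝ] X) y)
    rw [h1] at hk
    calc ‖(↑u⁻¹ : X →L[ℝ] X) y‖ = (1 / c) * (c * ‖(↑u⁻¹ : X →L[ℝ] X) y‖) := by
          field_simp
      _ ≤ (1 / c) * ‖y‖ := mul_le_mul_of_nonneg_left hk (by positivity)
  -- connectedness argument
  haveI : PreconnectedSpace (Set.Icc (0:ℝ) 1) := Subtype.preconnectedSpace isPreconnected_Icc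
  have hcont : Continuous T := continuous_const.add (continuous_id.smul continuous_const)
  set V : Set (Set.Icc (0:ℝ) 1) := {t | IsUnit (T t.val)} with hV
  have hopen : IsOpen V := by
    have : V = (fun t : Set.Icc (0:ℝ) 1 => T t.val) ⁻¹' {x | IsUnit x} := rfl
    rw [this]
    exact Units.isOpen.preimage (hcont.comp continuous_subtype_val)
  have hclosed : IsClosed V := by
    refine isClosed_of_closure_subset ?_
    intro t ht
    have hApos : (0:ℝ) < ‖A‖ + 1 := by positivity
    obtain ⟨s, hsV, hdist⟩ := Metric.mem_closure_iff.mp ht (c / (‖A‖ + 1))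
      (by positivity)
    obtain ⟨u, hu⟩ := hsV
    have hub := hinvb s.val s.2 u hu
    have hts : |t.val - s.val| < c / (‖A‖ + 1) := by
      rw [Subtype.dist_eq, Real.dist_eq] at hdist
      exact hdist
    set d : X →L[ℝ] X := (t.val - s.val) • A with hd
    have hnd : ‖d‖ < c := by
      have hdn : ‖d‖ ≤ |t.val - s.val| * ‖A‖ := by
        rw [hd]
        refine ContinuousLinearMap.opNorm_le_bound _ (by positivity) fun y => ?_
        rw [ContinuousLinearMap.smul_apply, norm_smul, Real.norm_eq_abs, mul_assoc]
        exact mul_le_mul_of_nonneg_left (A.le_opNorm y) (abs_nonneg _)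
      refine lt_of_le_of_lt hdn ?_
      have h1 : |t.val - s.val| * ‖A‖ ≤ |t.val - s.val| * (‖A‖ + 1) := by
        nlinarith [abs_nonneg (t.val - s.val), norm_nonneg A]
      have h2 : |t.val - s.val| * (‖A‖ + 1) < c := by
        calc |t.val - s.val| * (‖A‖ + 1) < (c / (‖A‖ + 1)) * (‖A‖ + 1) :=
              mul_lt_mul_of_pos_right hts hApos
          _ = c := by field_simp
      linarith
    have hsmall : ‖-((↑u⁻¹ : X →L[ℝ] X) * d)‖ < 1 := by
      rw [norm_neg]
      have hle : ‖(↑u⁻¹ : X →L[ℝ] X) * d‖ ≤ (1 / c) * ‖d‖ := by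
        apply ContinuousLinearMap.opNorm_le_bound _ (by positivity)
        intro y
        calc ‖((↑u⁻¹ : X →L[ℝ] X) * d) y‖ = ‖(↑u⁻¹ : X →L[ℝ] X) (d y)‖ := rfl
          _ ≤ (1 / c) * ‖d y‖ := hub (d y)
          _ ≤ (1 / c) * (‖d‖ * ‖y‖) := by
              have := d.le_opNorm y
              nlinarith [one_div_pos.mpr hcpos]
          _ = (1 / c) * ‖d‖ * ‖y‖ := by ring
      have : (1 / c) * ‖d‖ < (1 / c) * c := mul_lt_mul_of_pos_left hnd (by positivity)
      have hcc : (1 / c) * c = 1 := by field_simp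
      linarith
    have heq' : (↑u : X →L[ℝ] X) *
        (1 - -((↑u⁻¹ : X →L[ℝ] X) * d)) = T t.val := by
      calc (↑u : X →L[ℝ] X) * (1 - -((↑u⁻¹ : X →L[ℝ] X) * d))
          = ↑u * (1 + ↑u⁻¹ * d) := by rw [sub_neg_eq_add]
        _ = ↑u + ↑u * (↑u⁻¹ * d) := by rw [mul_add, mul_one]
        _ = ↑u + (↑u * ↑u⁻¹) * d := by rw [mul_assoc]
        _ = ↑u + d := by rw [u.mul_inv, one_mul]
        _ = T s.val + d := by rw [hu]
        _ = T t.val := by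
            rw [hT, hd]
            simp only
            rw [sub_smul]
            abel
    rw [hV, Set.mem_setOf_eq, ← heq']
    exact u.isUnit.mul (isUnit_one_sub_of_norm_lt_one hsmall)
  have hne : V.Nonempty := by
    refine ⟨⟨0, by norm_num⟩, ?_⟩
    have h0 : T 0 = 1 := by rw [hT]; simp
    simp only [hV, Set.mem_setOf_eq, h0]
    exact isUnit_one
  have hVuniv : V = Set.univ := IsClopen.eq_univ ⟨hclosed, hopen⟩ hne
  have hunit : IsUnit (T 1) := by
    have : (⟨1, by norm_num⟩ : Set.Icc (0:ℝ) 1) ∈ V := hVuniv ▸ Set.mem_univ _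
    exact this
  obtain ⟨u, hu⟩ := hunit
  have hT1 : ∀ x : X, T 1 x = x + A x := by intro x; rw [hTapply, one_smul]
  have hleft : ∀ x : X, (↑u⁻¹ : X →L[ℝ] X) (x + A x) = x := by
    intro x
    calc (↑u⁻¹ : X →L[ℝ] X) (x + A x) = (↑u⁻¹ : X →L[ℝ] X) (T 1 x) := by rw [hT1]
      _ = (↑u⁻¹ * ↑u : X →L[ℝ] X) x := by rw [← hu]; rfl
      _ = x := by rw [u.inv_mul]; rfl
  have hright : ∀ y : X, (↑u⁻¹ : X →L[ℝ] X) y + A ((↑u⁻¹ : X →L[ℝ] X) y) = y := by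
    intro y
    calc (↑u⁻¹ : X →L[ℝ] X) y + A ((↑u⁻¹ : X →L[ℝ] X) y)
        = T 1 ((↑u⁻¹ : X →L[ℝ] X) y) := (hT1 _).symm
      _ = (↑u * ↑u⁻¹ : X →L[ℝ] X) y := by rw [← hu]; rfl
      _ = y := by rw [u.mul_inv]; rfl
  refine ⟨⟨fun a b hab => ?_, fun y => ⟨(↑u⁻¹ : X →L[ℝ] X) y, hright y⟩⟩, hbound, ?_⟩
  · have hab' : a + A a = b + A b := hab
    rw [← hleft a, ← hleft b, hab']
  · intro x y hxy
    obtain ⟨hlo, hhi⟩ := hbound y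
    rw [hxy] at hlo hhi
    have h1l2 : (0:ℝ) < 1 - l2 := by linarith
    have h1l1 : (0:ℝ) < 1 - l1 := by linarith
    constructor
    · rw [div_mul_eq_mul_div, div_le_iff₀ (by linarith)]
      rw [div_mul_eq_mul_div, le_div_iff₀ h1l2] at hhi
      nlinarith [norm_nonneg x, norm_nonneg y]
    · rw [div_mul_eq_mul_div, le_div_iff₀ h1l1]
      rw [div_mul_eq_mul_div, div_le_iff₀ (by linarith)] at hlo
      nlinarith [norm_nonneg x, norm_nonneg y]
end

section
/- Let X, Y be real Banach spaces, T ∈ B(X,Y) with a quasi-linear projector generalized inverse T^H : Y → X, and let δT ∈ B(X,Y) be such that T^H is quasi-additive on R(δT) and there exist λ₁, λ₂ ∈ [0,1) with ‖T^H(δT x)‖ ≤ λ₁‖x‖ + λ₂‖(I_X + T^H δT)x‖ for all x ∈ X. Then I_X + T^H δT is invertible in B(X,X), and the operator T̄^H := (I_X + T^H δT)^{-1} ∘ T^H satisfies ‖T̄^H − T^H‖ ≤ ‖T^H‖ · (2+λ₁)(1+λ₂)/((1−λ₁)(1−λ₂)), where the norm of a homogeneous map F is ‖F‖ = sup{‖F(y)‖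 : ‖y‖ = 1}. -/
open Metric Set

variable {X Y : Type*} [NormedAddCommGroup X] [NormedSpace ℝ X]
  [NormedAddCommGroup Y] [NormedSpace ℝ Y]

private lemma arith_aux (t a b n l1 l2 : ℝ) (ht0 : 0 ≤ t) (ht1 : t ≤ 1) (hl1 : 0 ≤ l1)
    (hl1' : l1 < 1) (hl2 : 0 ≤ l2) (hl2' : l2 < 1) (hb : 0 ≤ b) (hn : 0 ≤ n)
    (h1 : a ≤ l1*n + l2*(b + (1-t)*a)) (h2 : n ≤ b + t*a) :
    (1-l1)*(1-l2)*n ≤ (1+2*l2)*b := by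
  have hd : 0 < 1 - l2*(1-t) := by nlinarith
  have E1 : (1 - l2*(1-t))*a ≤ l1*n + l2*b := by nlinarith
  have star : (1-l2+t*(l2-l1))*n ≤ (1-l2+2*t*l2)*b := by
    nlinarith [mul_le_mul_of_nonneg_left E1 ht0, mul_le_mul_of_nonneg_left h2 hd.le]
  have hden : 0 < 1-l2+2*t*l2 := by nlinarith
  have f0 : 0 ≤ (1-l2)*(1+2*l2) - (1-l2)*((1-l1)*(1-l2)) := by
    nlinarith [mul_nonneg (sub_nonneg.2 hl2'.le) (by nlinarith : (0:ℝ) ≤ l1*(1-l2)+3*l2)]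
  have f1 : 0 ≤ (1-l1)*(1+2*l2) - (1+l2)*((1-l1)*(1-l2)) := by
    nlinarith [mul_nonneg (sub_nonneg.2 hl1'.le) (by nlinarith : (0:ℝ) ≤ 2*l2+l2*l2)]
  have comp : (1-l2+2*t*l2)*((1-l1)*(1-l2)) ≤ (1-l2+t*(l2-l1))*(1+2*l2) := by
    nlinarith [mul_nonneg (sub_nonneg.2 ht1) f0, mul_nonneg ht0 f1]
  have final : (1-l2+2*t*l2) * ((1-l1)*(1-l2)*n) ≤ (1-l2+2*t*l2) * ((1+2*l2)*b) := by
    nlinarith [mul_le_mul_of_nonneg_left star (by positivity : (0:ℝ) ≤ 1+2*l2),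
      mul_le_mul_of_nonneg_right comp hn]
  exact le_of_mul_le_mul_left final hden

private lemma inv_norm_le' (u : (X →L[ℝ] X)ˣ) (c : ℝ) (hc : 0 < c)
    (h : ∀ x, c * ‖x‖ ≤ ‖(u : X →L[ℝ] X) x‖) :
    ‖((u⁻¹ : (X →L[ℝ] X)ˣ) : X →L[ℝ] X)‖ ≤ 1 / c := by
  apply ContinuousLinearMap.opNorm_le_bound _ (by positivity)
  intro y
  have e : (u : X →L[ℝ] X) (((u⁻¹ : (X →L[ℝ] X)ˣ) : X →L[ℝ] X) y) = y := by
    have h1 : (u : X →L[ℝ] X) * ((u⁻¹ : (X →L[ℝ] X)ˣ) : X →L[ℝ] X) = 1 := u.mul_inv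
    calc (u : X →L[ℝ] X) (((u⁻¹ : (X →L[ℝ] X)ˣ) : X →L[ℝ] X) y)
        = ((u : X →L[ℝ] X) * ((u⁻¹ : (X →L[ℝ] X)ˣ) : X →L[ℝ] X)) y := rfl
      _ = y := by rw [h1]; rfl
  have := h (((u⁻¹ : (X →L[ℝ] X)ˣ) : X →L[ℝ] X) y)
  rw [e] at this
  rw [one_div, inv_mul_eq_div, le_div_iff₀ hc]
  linarith

private lemma isUnit_one_add_of_path [CompleteSpace X] (A : X →L[ℝ] X) (c : ℝ) (hc : 0 < c)
    (hlow : ∀ t : ℝ, 0 ≤ t → t ≤ 1 → ∀ x : X, c * ‖x‖ ≤ ‖x + t • A x‖) :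
    IsUnit (1 + A) := by
  obtain ⟨N, hN⟩ := exists_nat_gt (‖A‖ / c)
  have hN1 : (0:ℝ) < (N:ℝ) + 1 := by positivity
  have key : ∀ k : ℕ, k ≤ N + 1 → IsUnit (1 + (((k:ℝ))/((N:ℝ)+1)) • A) := by
    intro k
    induction k with
    | zero => intro _; simp
    | succ k ih =>
      intro hk
      have hk' : k ≤ N + 1 := Nat.le_of_succ_le hk
      have ih' := ih hk'
      set t : ℝ := (k:ℝ)/((N:ℝ)+1) with ht_def
      set s : ℝ := ((k:ℝ)+1)/((N:ℝ)+1) with hs_def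
      have ht0 : 0 ≤ t := by positivity
      have ht1 : t ≤ 1 := by
        rw [div_le_one hN1]
        have : (k:ℝ) ≤ (N:ℝ) + 1 := by exact_mod_cast hk'
        linarith
      set u := ih'.unit with hu_def
      have hu : (u : X →L[ℝ] X) = 1 + t • A := ih'.unit_spec
      have hlowu : ∀ x, c * ‖x‖ ≤ ‖(u : X →L[ℝ] X) x‖ := by
        intro x
        rw [hu]
        simpa using hlow t ht0 ht1 x
      have hinv : ‖((u⁻¹ : (X →L[ℝ] X)ˣ) : X →L[ℝ] X)‖ ≤ 1 / c := inv_norm_le' u c hc hlowu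
      set v : X →L[ℝ] X := (1/((N:ℝ)+1)) • A with hv_def
      have hv : ‖v‖ < c := by
        have h1 : ‖v‖ ≤ ‖(1/((N:ℝ)+1))‖ * ‖A‖ := ContinuousLinearMap.opNorm_smul_le _ _
        rw [Real.norm_eq_abs, abs_of_pos (by positivity)] at h1
        rw [div_lt_iff₀ hc] at hN
        have h2 : 1/((N:ℝ)+1) * ‖A‖ < c := by
          rw [div_mul_eq_mul_div, one_mul, div_lt_iff₀ hN1]
          nlinarith
        linarith
      set w : X →L[ℝ] X := ((u⁻¹ : (X →L[ℝ] X)ˣ) : X →L[ℝ] X) * v with hw_def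
      have hw : ‖w‖ < 1 := by
        calc ‖w‖ ≤ ‖((u⁻¹ : (X →L[ℝ] X)ˣ) : X →L[ℝ] X)‖ * ‖v‖ := norm_mul_le _ _
          _ ≤ (1/c) * ‖v‖ := by
              apply mul_le_mul_of_nonneg_right hinv (norm_nonneg _)
          _ < (1/c) * c := by
              apply mul_lt_mul_of_pos_left hv (by positivity)
          _ = 1 := by field_simp
      have hunit_w : IsUnit (1 + w) := by
        have := (Units.oneSub (-w) (by rwa [norm_neg])).isUnit
        simpa [Units.oneSub, sub_neg_eq_add] using this
      have heq : (1 : X →L[ℝ] X) + s • A = (u : X →L[ℝ] X) * (1 + w) := by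
        rw [mul_add, mul_one, hw_def, ← mul_assoc]
        rw [u.mul_inv, one_mul, hu, hv_def]
        have : s • A = t • A + (1/((N:ℝ)+1)) • A := by
          rw [← add_smul]
          congr 1
          rw [ht_def, hs_def]
          field_simp
        rw [this]
        abel
      rw [Nat.cast_succ, heq]
      exact ih'.mul hunit_w
  have hfin := key (N+1) le_rfl
  have h1 : ((N:ℝ)+1)/((N:ℝ)+1) = 1 := div_self (ne_of_gt hN1)
  rw [Nat.cast_succ] at hfin
  rwa [h1, one_smul] at hfin

private lemma hnorm_nonneg' (F : Y → X) : 0 ≤ hnorm F :=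
  Real.sSup_nonneg (by rintro _ ⟨x, hx, rfl⟩; positivity)

private lemma hnorm_le_bound (F : Y → X) (C : ℝ) (hC : 0 ≤ C)
    (h : ∀ y : Y, ‖y‖ = 1 → ‖F y‖ ≤ C) : hnorm F ≤ C :=
  Real.sSup_le (by rintro _ ⟨x, hx, rfl⟩; exact h x hx) hC

private lemma bddhom_le (F : Y → X) (hF : BddHomOp F) : ∀ y : Y, ‖F y‖ ≤ hnorm F * ‖y‖ := by
  obtain ⟨hhom, M, hM⟩ := hF
  have bdd : BddAbove ((fun x => ‖F x‖) '' {x : Y | ‖x‖ = 1}) := by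
    refine ⟨M, ?_⟩
    rintro _ ⟨x, hx, rfl⟩
    have := hM x
    simp only [Set.mem_setOf_eq] at hx
    simpa [hx] using this
  intro y
  by_cases hy : y = 0
  · have h0 : F 0 = 0 := by
      have := hhom 0 0
      simpa using this
    simp [hy, h0]
  · set u := ‖y‖⁻¹ • y with hu_def
    have hu : ‖u‖ = 1 := norm_smul_inv_norm hy
    have hmem : ‖F u‖ ∈ (fun x => ‖F x‖) '' {x : Y | ‖x‖ = 1} := ⟨u, hu, rfl⟩
    have hle : ‖F u‖ ≤ hnorm F := le_csSup bdd hmem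
    have hyu : ‖y‖ • u = y := smul_inv_smul₀ (norm_ne_zero_iff.2 hy) y
    have hFy : F y = ‖y‖ • F u := by
      conv_lhs => rw [← hyu]
      exact hhom _ _
    rw [hFy, norm_smul, Real.norm_eq_abs, abs_of_nonneg (norm_nonneg y), mul_comm]
    exact mul_le_mul_of_nonneg_right hle (norm_nonneg y)

theorem stmt_17 [CompleteSpace X] [CompleteSpace Y] (T δT : X →L[ℝ] Y)
    (TH : Y → X) (hTH : QLPGenInv T TH)
    (hq : QuasiAdditiveOn TH (Set.range ⇑δT))
    (A : X →L[ℝ] X) (hA : ∀ x, A x = TH (δT x))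
    (l1 l2 : ℝ) (hl1 : 0 ≤ l1) (hl1' : l1 < 1) (hl2 : 0 ≤ l2) (hl2' : l2 < 1)
    (hbound : ∀ x : X, ‖A x‖ ≤ l1 * ‖x‖ + l2 * ‖x + A x‖) :
    IsUnit (1 + A) ∧
    hnorm (fun y => Ring.inverse (1 + A) (TH y) - TH y) ≤
      hnorm TH * ((2 + l1) * (1 + l2) / ((1 - l1) * (1 - l2))) := by
  have hd1 : (0:ℝ) < 1 - l1 := by linarith
  have hd2 : (0:ℝ) < 1 - l2 := by linarith
  have hden : (0:ℝ) < 1 + 2*l2 := by linarith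
  have hAnorm : ‖A‖ ≤ (l1+l2)/(1-l2) := by
    apply ContinuousLinearMap.opNorm_le_bound _ (by positivity)
    intro x
    have h1 := hbound x
    have h2 : ‖x + A x‖ ≤ ‖x‖ + ‖A x‖ := norm_add_le _ _
    rw [div_mul_eq_mul_div, le_div_iff₀ hd2]
    nlinarith [norm_nonneg (A x), norm_nonneg x]
  set c : ℝ := (1-l1)*(1-l2)/(1+2*l2) with hc_def
  have hc : 0 < c := div_pos (mul_pos hd1 hd2) hden
  have hlow : ∀ t : ℝ, 0 ≤ t → t ≤ 1 → ∀ x : X, c * ‖x‖ ≤ ‖x + t • A x‖ := by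
    intro t ht0 ht1 x
    have h1' : ‖x + A x‖ ≤ ‖x + t • A x‖ + (1-t)*‖A x‖ := by
      have hx : x + A x = (x + t • A x) + (1-t) • A x := by module
      rw [hx]
      calc ‖(x + t • A x) + (1-t) • A x‖ ≤ ‖x + t • A x‖ + ‖(1-t) • A x‖ := norm_add_le _ _
        _ = ‖x + t • A x‖ + (1-t)*‖A x‖ := by
            rw [norm_smul, Real.norm_eq_abs, abs_of_nonneg (by linarith)]
    have h1 : ‖A x‖ ≤ l1*‖x‖ + l2*(‖x + t • A x‖ + (1-t)*‖A x‖) := by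
      have := hbound x
      nlinarith [mul_le_mul_of_nonneg_left h1' hl2]
    have h2 : ‖x‖ ≤ ‖x + t • A x‖ + t*‖A x‖ := by
      have hx : x = (x + t • A x) - t • A x := by module
      calc ‖x‖ = ‖(x + t • A x) - t • A x‖ := by rw [← hx]
        _ ≤ ‖x + t • A x‖ + ‖t • A x‖ := norm_sub_le _ _
        _ = ‖x + t • A x‖ + t*‖A x‖ := by
            rw [norm_smul, Real.norm_eq_abs, abs_of_nonneg ht0]
    have key := arith_aux t (‖A x‖) (‖x + t • A x‖) (‖x‖) l1 l2 ht0 ht1 hl1 hl1' hl2 hl2'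
      (norm_nonneg _) (norm_nonneg _) h1 h2
    rw [hc_def, div_mul_eq_mul_div, div_le_iff₀ hden]
    nlinarith [key]
  have hU : IsUnit (1 + A) := isUnit_one_add_of_path A c hc hlow
  refine ⟨hU, ?_⟩
  set Binv : X →L[ℝ] X := ((hU.unit⁻¹ : (X →L[ℝ] X)ˣ) : X →L[ℝ] X) with hBinv_def
  have hring : Ring.inverse (1 + A) = Binv := by
    rw [← hU.unit_spec, Ring.inverse_unit]
  have hBx : ∀ x : X, (1-l1)/(1+l2) * ‖x‖ ≤ ‖(hU.unit : X →L[ℝ] X) x‖ := by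
    intro x
    rw [hU.unit_spec]
    have happ : (1 + A) x = x + A x := rfl
    rw [happ]
    have h1 := hbound x
    have h2 : ‖x‖ ≤ ‖x + A x‖ + ‖A x‖ := by
      calc ‖x‖ = ‖(x + A x) - A x‖ := by rw [add_sub_cancel_right]
        _ ≤ ‖x + A x‖ + ‖A x‖ := norm_sub_le _ _
    rw [div_mul_eq_mul_div, div_le_iff₀ (by linarith : (0:ℝ) < 1+l2)]
    nlinarith [norm_nonneg (A x), norm_nonneg (x + A x)]
  have hBinv_norm : ‖Binv‖ ≤ (1+l2)/(1-l1) := by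
    have := inv_norm_le' hU.unit ((1-l1)/(1+l2)) (by positivity) hBx
    rwa [one_div_div] at this
  have hsub : Binv - 1 = -(Binv * A) := by
    have h1 : Binv * (1 + A) = 1 := by
      have h0 := hU.unit.inv_mul
      rwa [hU.unit_spec] at h0
    rw [mul_add, mul_one] at h1
    rw [← h1]
    abel
  have hC : ‖Binv - (1 : X →L[ℝ] X)‖ ≤ (1+l2)/(1-l1) * ((l1+l2)/(1-l2)) := by
    rw [hsub, norm_neg]
    calc ‖Binv * A‖ ≤ ‖Binv‖ * ‖A‖ := norm_mul_le _ _
      _ ≤ (1+l2)/(1-l1) * ((l1+l2)/(1-l2)) := by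
          apply mul_le_mul hBinv_norm hAnorm (norm_nonneg _) (by positivity)
  have hK : (1+l2)/(1-l1) * ((l1+l2)/(1-l2)) ≤ (2+l1)*(1+l2)/((1-l1)*(1-l2)) := by
    rw [div_mul_div_comm]
    rw [div_le_div_iff_of_pos_right (mul_pos hd1 hd2)]
    nlinarith
  have hTHle := bddhom_le TH hTH.1
  have hTHnn : 0 ≤ hnorm TH := hnorm_nonneg' TH
  have hKnn : 0 ≤ (2+l1)*(1+l2)/((1-l1)*(1-l2)) := by positivity
  simp only [hring]
  apply hnorm_le_bound _ _ (mul_nonneg hTHnn hKnn)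
  intro y hy
  have heq : Binv (TH y) - TH y = (Binv - 1) (TH y) := by
    simp [ContinuousLinearMap.sub_apply]
  rw [heq]
  calc ‖(Binv - 1) (TH y)‖ ≤ ‖Binv - (1 : X →L[ℝ] X)‖ * ‖TH y‖ :=
        ContinuousLinearMap.le_opNorm _ _
    _ ≤ ((1+l2)/(1-l1) * ((l1+l2)/(1-l2))) * (hnorm TH * ‖y‖) := by
        apply mul_le_mul hC (hTHle y) (norm_nonneg _) (by positivity)
    _ = hnorm TH * ((1+l2)/(1-l1) * ((l1+l2)/(1-l2))) := by rw [hy]; ring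
    _ ≤ hnorm TH * ((2 + l1) * (1 + l2) / ((1 - l1) * (1 - l2))) := by
        apply mul_le_mul_of_nonneg_left hK hTHnn
end
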